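/- Let G = (V, E) be a simple graph with Δ(G) ≤ 8, let π be a partial 8-edge-coloring of G, and let E_T ⊆ E be a set of uncolored butterfly-like edges, all of the same type T ∈ {0, 1_{ab}, 3_{ab}, 4_{ab}, 5_{ab}, 6_{abcd}} for some distinct colors a, b, c, d ∈ {1,…,8}, which are pairwise 4-independent and pairwise T-chain independent. Then there exists a partial 8-edge-coloring σ of G whose set of colored edges is π's colored set together with all edges of E_T. -/

import Mathlib

open SimpleGraph

open scoped Classical in
/-- `π` is a proper partial `D`-edge-coloring of `G`: it assigns `none` outside the edge set,
and distinct incident edges receive different colors. -/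
def IsProperPEC {V : Type} (G : SimpleGraph V) (D : ℕ) (π : Sym2 V → Option (Fin D)) : Prop :=
  (∀ e, π e ≠ none → e ∈ G.edgeSet) ∧
    ∀ e₁ e₂ : Sym2 V, e₁ ≠ e₂ → (∃ v, v ∈ e₁ ∧ v ∈ e₂) → π e₁ ≠ none → π e₁ ≠ π e₂

/-- Number of neighbors of `x` having degree `8`. -/
def deg8Nbrs {V : Type} [Fintype V] [DecidableEq V] (G : SimpleGraph V) [DecidableRel G.Adj]
    (x : V) : ℕ :=
  ((G.neighborFinset x).filter (fun w => G.degree w = 8)).card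

/-- The edge `xy` is `x`-weak. -/
def IsXWeak {V : Type} [Fintype V] [DecidableEq V] (G : SimpleGraph V) [DecidableRel G.Adj]
    (x y : V) : Prop :=
  deg8Nbrs G x ≤ 8 - G.degree y + (if G.degree y = 8 then 1 else 0)

/-- The edge `e` is weak: `e = xy` with `xy` `x`-weak or `y`-weak. -/
def IsWeakEdge {V : Type} [Fintype V] [DecidableEq V] (G : SimpleGraph V) [DecidableRel G.Adj]
    (e : Sym2 V) : Prop :=
  ∃ x y : V, e = s(x, y) ∧ G.Adj x y ∧ (IsXWeak G x y ∨ IsXWeak G y x)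

/-- A butterfly of the first kind with the given vertices. -/
def IsButterflyB1 {V : Type} [Fintype V] [DecidableEq V] (G : SimpleGraph V) [DecidableRel G.Adj]
    (x y z v₁ v₂ v₃ : V) : Prop :=
  List.Pairwise (· ≠ ·) [x, y, z, v₁, v₂, v₃] ∧
  G.Adj x y ∧ G.Adj x z ∧ G.Adj y v₁ ∧ G.Adj y v₃ ∧ G.Adj z v₁ ∧ G.Adj z v₂ ∧
  G.Adj x v₁ ∧ G.Adj x v₂ ∧ G.Adj x v₃ ∧
  G.degree y = 3 ∧ G.degree z = 3 ∧ G.degree x = 8 ∧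
  G.degree v₁ = 8 ∧ G.degree v₂ = 8 ∧ G.degree v₃ = 8

/-- A butterfly of the second kind with the given vertices. -/
def IsButterflyB2 {V : Type} [Fintype V] [DecidableEq V] (G : SimpleGraph V) [DecidableRel G.Adj]
    (x y z v₁ v₂ v₃ v₄ : V) : Prop :=
  List.Pairwise (· ≠ ·) [x, y, z, v₁, v₂, v₃, v₄] ∧
  G.Adj x y ∧ G.Adj x z ∧ G.Adj y v₁ ∧ G.Adj y v₄ ∧ G.Adj z v₂ ∧ G.Adj z v₃ ∧
  G.Adj x v₁ ∧ G.Adj x v₂ ∧ G.Adj x v₃ ∧ G.Adj x v₄ ∧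
  G.degree y = 3 ∧ G.degree z = 3 ∧ G.degree x = 8 ∧
  G.degree v₁ = 8 ∧ G.degree v₂ = 8 ∧ G.degree v₃ = 8 ∧ G.degree v₄ = 8

/-- The pair `(x, y)` is the distinguished edge `xy` of some butterfly of `G`. -/
def IsButterflyLikeAt {V : Type} [Fintype V] [DecidableEq V] (G : SimpleGraph V)
    [DecidableRel G.Adj] (x y : V) : Prop :=
  (∃ z v₁ v₂ v₃, IsButterflyB1 G x y z v₁ v₂ v₃) ∨
  (∃ z v₁ v₂ v₃ v₄, IsButterflyB2 G x y z v₁ v₂ v₃ v₄)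

/-- The edge `e` is butterfly-like. -/
def IsButterflyLike {V : Type} [Fintype V] [DecidableEq V] (G : SimpleGraph V)
    [DecidableRel G.Adj] (e : Sym2 V) : Prop :=
  ∃ x y : V, e = s(x, y) ∧ IsButterflyLikeAt G x y

/-- An edge is reducible when it is weak or butterfly-like. -/
def IsReducible {V : Type} [Fintype V] [DecidableEq V] (G : SimpleGraph V) [DecidableRel G.Adj]
    (e : Sym2 V) : Prop :=
  IsWeakEdge G e ∨ IsButterflyLike G e

/-- Reversal of darts, as a permutation. -/
def dartRev {V : Type} (G : SimpleGraph V) : Equiv.Perm G.Dart :=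
  ⟨SimpleGraph.Dart.symm, SimpleGraph.Dart.symm,
    fun d => SimpleGraph.Dart.symm_symm d, fun d => SimpleGraph.Dart.symm_symm d⟩

/-- `ρ` is a rotation system of `G`: it permutes the darts around each vertex
in a single cycle. -/
def IsRotationSystem {V : Type} (G : SimpleGraph V) (ρ : Equiv.Perm G.Dart) : Prop :=
  (∀ d : G.Dart, (ρ d).fst = d.fst) ∧
    ∀ d d' : G.Dart, d.fst = d'.fst → ρ.SameCycle d d'

/-- The face permutation of a rotation system. -/
def facePerm {V : Type} (G : SimpleGraph V) (ρ : Equiv.Perm G.Dart) : Equiv.Perm G.Dart :=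
  (dartRev G).trans ρ

/-- The setoid of darts whose classes are the faces of a combinatorial embedding. -/
def faceSetoid {V : Type} (G : SimpleGraph V) (ρ : Equiv.Perm G.Dart) : Setoid G.Dart :=
  ⟨(facePerm G ρ).SameCycle, Equiv.Perm.SameCycle.equivalence _⟩

/-- The number of faces of a combinatorial embedding. -/
noncomputable def numFaces {V : Type} (G : SimpleGraph V) (ρ : Equiv.Perm G.Dart) : ℕ :=
  Nat.card (Quotient (faceSetoid G ρ))

/-- The number of isolated vertices of `G`. -/
noncomputable def numIsolated {V : Type} (G : SimpleGraph V) : ℕ :=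
  Nat.card {v : V // ∀ w, ¬ G.Adj v w}

/-- The number of connected components of `G`. -/
noncomputable def numComponents {V : Type} (G : SimpleGraph V) : ℕ :=
  Nat.card G.ConnectedComponent

/-- `G` is embeddable in an orientable surface of genus at most `g`: it has a combinatorial
embedding (rotation system) whose Euler characteristic, summed over components, is at least
`2 * (number of components) - 2 * g`. -/
def GenusLE {V : Type} (G : SimpleGraph V) (g : ℕ) : Prop :=
  ∃ ρ : Equiv.Perm G.Dart, IsRotationSystem G ρ ∧
    2 * (numComponents G : ℤ) - 2 * (g : ℤ) ≤
      (Nat.card V : ℤ) - (Nat.card G.edgeSet : ℤ) + ((numFaces G ρ + numIsolated G : ℕ) : ℤ)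

/-- `G` is planar: it is embeddable in an orientable surface of genus `0`, i.e. the sphere. -/
def IsPlanar {V : Type} (G : SimpleGraph V) : Prop := GenusLE G 0

/-- Color `c` is free at `v` (no colored edge incident to `v` has color `c`). -/
def freeAt {V : Type} {D : ℕ} (π : Sym2 V → Option (Fin D)) (v : V) (c : Fin D) : Prop :=
  ∀ e : Sym2 V, v ∈ e → π e ≠ some c

/-- The graph formed by the edges colored `a` or `b`; its components are the `(a,b)`-chains. -/
def chainGraph {V : Type} {D : ℕ} (π : Sym2 V → Option (Fin D)) (a b : Fin D) : SimpleGraph V :=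
  SimpleGraph.fromEdgeSet {e | π e = some a ∨ π e = some b}

/-- `u` and `v` lie on the same `(a,b)`-chain. -/
def chainReach {V : Type} {D : ℕ} (π : Sym2 V → Option (Fin D)) (a b : Fin D) (u v : V) : Prop :=
  (chainGraph π a b).Reachable u v

/-- `v` is an endpoint of its `(a,b)`-chain (it has at most one neighbor on the chain). -/
def chainEndpoint {V : Type} {D : ℕ} (π : Sym2 V → Option (Fin D)) (a b : Fin D) (v : V) : Prop :=
  ((chainGraph π a b).neighborSet v).Subsingleton

/-- There is an `(a,b)`-chain with endpoints `u` and `v`. -/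
def chainPathEndpoints {V : Type} {D : ℕ} (π : Sym2 V → Option (Fin D)) (a b : Fin D)
    (u v : V) : Prop :=
  u ≠ v ∧ chainReach π a b u v ∧ chainEndpoint π a b u ∧ chainEndpoint π a b v

/-- The `(a,b)`-chain containing `x` is a cycle (no vertex of it is an endpoint). -/
def inChainCycle {V : Type} {D : ℕ} (π : Sym2 V → Option (Fin D)) (a b : Fin D) (x : V) : Prop :=
  ∀ v, chainReach π a b x v → ¬ chainEndpoint π a b v

/-- The vertex `w` is at distance at most `k` from the edge `e`. -/
def vtxEdgeDistLE {V : Type} (G : SimpleGraph V) (k : ℕ) (w : V) (e : Sym2 V) : Prop :=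
  ∃ u, u ∈ e ∧ ∃ p : G.Walk w u, p.length ≤ k

/-- The edges `e₁` and `e₂` are at distance at most `k` from each other. -/
def edgeDistLE {V : Type} (G : SimpleGraph V) (k : ℕ) (e₁ e₂ : Sym2 V) : Prop :=
  ∃ u, u ∈ e₁ ∧ vtxEdgeDistLE G k u e₂

/-- The uncolored edge `xy` has type 0: `π` can be turned into a coloring additionally coloring
`xy` by recoloring only edges at distance at most 1 from `xy`. -/
def HasType0 {V : Type} (G : SimpleGraph V) (π : Sym2 V → Option (Fin 8)) (x y : V) : Prop :=
  ∃ σ : Sym2 V → Option (Fin 8), IsProperPEC G 8 σ ∧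
    (∀ e, σ e ≠ none ↔ (π e ≠ none ∨ e = s(x, y))) ∧
    (∀ e, ¬ edgeDistLE G 1 e s(x, y) → σ e = π e)

/-- The uncolored edge `xy` has type `1_{ab}`. -/
def HasType1 {V : Type} (π : Sym2 V → Option (Fin 8)) (x y : V) (a b : Fin 8) : Prop :=
  freeAt π x a ∧ freeAt π y b ∧ ¬ (chainReach π a b x y ∧ chainEndpoint π a b x)

/-- The uncolored edge `xy` has type `2_{ab}`. -/
def HasType2 {V : Type} (G : SimpleGraph V) (π : Sym2 V → Option (Fin 8)) (x y : V)
    (a b : Fin 8) : Prop :=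
  freeAt π y a ∧ freeAt π y b ∧
  ∃ c : Fin 8, c ≠ b ∧ freeAt π x c ∧
    ∃ z : V, G.Adj x z ∧ G.Adj y z ∧ π s(y, z) = some c ∧ π s(x, z) = some a ∧
      ¬ inChainCycle π a b x

/-- The uncolored edge `xy` has type `3_{ab}`. -/
def HasType3 {V : Type} (G : SimpleGraph V) (π : Sym2 V → Option (Fin 8)) (x y : V)
    (a b : Fin 8) : Prop :=
  freeAt π x a ∧ freeAt π y b ∧ chainPathEndpoints π a b x y ∧
  ∃ c : Fin 8, c ≠ b ∧ freeAt π y c ∧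
    ∃ z : V, G.Adj x z ∧ freeAt π z b ∧ π s(x, z) = some c

/-- The uncolored edge `xy` has type `4_{ab}`. -/
def HasType4 {V : Type} (G : SimpleGraph V) (π : Sym2 V → Option (Fin 8)) (x y : V)
    (a b : Fin 8) : Prop :=
  freeAt π y a ∧ freeAt π y b ∧ inChainCycle π a b x ∧
  ∃ c : Fin 8, freeAt π x c ∧
    ∃ z v : V, z ≠ v ∧ z ≠ x ∧ z ≠ y ∧ v ≠ x ∧ v ≠ y ∧
      G.Adj x v ∧ G.Adj z v ∧ π s(x, v) = some a ∧ π s(z, v) = some c ∧ freeAt π z b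

/-- The uncolored edge `xy` has type `5_{ab}`. -/
def HasType5 {V : Type} (G : SimpleGraph V) (π : Sym2 V → Option (Fin 8)) (x y : V)
    (a b : Fin 8) : Prop :=
  freeAt π y a ∧ freeAt π x b ∧ chainPathEndpoints π a b x y ∧
  ∃ c : Fin 8, c ≠ a ∧ freeAt π y c ∧
    ∃ z v : V, z ≠ v ∧ z ≠ x ∧ z ≠ y ∧ v ≠ x ∧ v ≠ y ∧
      G.Adj x v ∧ G.Adj z v ∧ π s(x, v) = some c ∧ π s(z, v) = some a ∧
      freeAt π z b ∧ freeAt π z c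

/-- The uncolored edge `xy` has type `6_{abcd}`. -/
def HasType6 {V : Type} (G : SimpleGraph V) (π : Sym2 V → Option (Fin 8)) (x y : V)
    (a b c d : Fin 8) : Prop :=
  freeAt π y a ∧ freeAt π y c ∧ freeAt π y d ∧ freeAt π x b ∧
  chainPathEndpoints π a b x y ∧ inChainCycle π c d x ∧
  ∃ z v₁ v₂ : V, z ≠ v₁ ∧ z ≠ v₂ ∧ v₁ ≠ v₂ ∧ z ≠ x ∧ z ≠ y ∧ v₁ ≠ x ∧ v₁ ≠ y ∧ v₂ ≠ x ∧ v₂ ≠ y ∧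
    G.Adj x v₁ ∧ G.Adj x v₂ ∧ G.Adj z v₁ ∧ G.Adj z v₂ ∧
    π s(x, v₁) = some c ∧ π s(x, v₂) = some a ∧ π s(z, v₁) = some a ∧ π s(z, v₂) = some c ∧
    freeAt π z b ∧ freeAt π z d

/-- A tag for the types `0`, `1_{ab}`, `3_{ab}`, `4_{ab}`, `5_{ab}`, `6_{abcd}`. -/
inductive TypeTag | t0 | t1 | t3 | t4 | t5 | t6

/-- The uncolored butterfly-like edge `xy` has the type designated by the tag. -/
def HasTypeTag {V : Type} (G : SimpleGraph V) (π : Sym2 V → Option (Fin 8)) (tag : TypeTag)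
    (a b c d : Fin 8) (x y : V) : Prop :=
  match tag with
  | .t0 => HasType0 G π x y
  | .t1 => HasType1 π x y a b
  | .t3 => HasType3 G π x y a b
  | .t4 => HasType4 G π x y a b
  | .t5 => HasType5 G π x y a b
  | .t6 => HasType6 G π x y a b c d

/-- Edges `e₁` and `e₂` are `(a,b)`-chain independent: there is no `(a,b)`-chain whose two
endpoints are distinct vertices at distance at most 1 from `e₁` and `e₂` respectively. -/
def ChainIndep {V : Type} (G : SimpleGraph V) (π : Sym2 V → Option (Fin 8)) (a b : Fin 8)
    (e₁ e₂ : Sym2 V) : Prop :=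
  ¬ ∃ w₁ w₂ : V, vtxEdgeDistLE G 1 w₁ e₁ ∧ vtxEdgeDistLE G 1 w₂ e₂ ∧
      chainPathEndpoints π a b w₁ w₂

/-- `T`-chain independence for two butterfly-like edges of the same type `T`. -/
def TagChainIndep {V : Type} (G : SimpleGraph V) (π : Sym2 V → Option (Fin 8)) (tag : TypeTag)
    (a b c d : Fin 8) (e₁ e₂ : Sym2 V) : Prop :=
  match tag with
  | .t0 => True
  | .t6 => ChainIndep G π a b e₁ e₂ ∧ ChainIndep G π c d e₁ e₂
  | _ => ChainIndep G π a b e₁ e₂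

section Helpers
open SimpleGraph
variable {V : Type}

/-- The second (incidence) part of properness, independent of `G`. -/
def Proper2 {D : ℕ} (π : Sym2 V → Option (Fin D)) : Prop :=
  ∀ e₁ e₂ : Sym2 V, e₁ ≠ e₂ → (∃ v, v ∈ e₁ ∧ v ∈ e₂) → π e₁ ≠ none → π e₁ ≠ π e₂

lemma IsProperPEC.p2 {D : ℕ} {G : SimpleGraph V} {π : Sym2 V → Option (Fin D)}
    (h : IsProperPEC G D π) : Proper2 π := h.2

lemma unique_color {D : ℕ} {π : Sym2 V → Option (Fin D)} (h : Proper2 π) {e₁ e₂ : Sym2 V}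
    {k : Fin D} {v : V} (h1 : π e₁ = some k) (h2 : π e₂ = some k) (hv1 : v ∈ e₁)
    (hv2 : v ∈ e₂) : e₁ = e₂ := by
  by_contra hne
  exact h e₁ e₂ hne ⟨v, hv1, hv2⟩ (by simp [h1]) (by rw [h1, h2])

lemma chainGraph_adj {D : ℕ} {π : Sym2 V → Option (Fin D)} {a b : Fin D} {u w : V} :
    (chainGraph π a b).Adj u w ↔ (π s(u,w) = some a ∨ π s(u,w) = some b) ∧ u ≠ w := by
  rw [chainGraph, fromEdgeSet_adj]; rfl

/-- a vertex of a chain graph has at most two neighbors -/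
lemma chain_deg_le_two {D : ℕ} {π : Sym2 V → Option (Fin D)} (hp : Proper2 π) {a b : Fin D}
    {v w₁ w₂ w₃ : V} (h1 : (chainGraph π a b).Adj v w₁) (h2 : (chainGraph π a b).Adj v w₂)
    (h3 : (chainGraph π a b).Adj v w₃) : w₁ = w₂ ∨ w₁ = w₃ ∨ w₂ = w₃ := by
  rw [chainGraph_adj] at h1 h2 h3
  have key : ∀ wi wj : V, π s(v,wi) = π s(v,wj) → (π s(v,wi) = some a ∨ π s(v,wi) = some b) →
      wi = wj := by
    intro wi wj hij hcol
    rcases hcol with hc | hc <;>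
    · rw [hc] at hij
      have := unique_color hp hc hij.symm (Sym2.mem_mk_left v wi) (Sym2.mem_mk_left v wj)
      rw [Sym2.congr_right] at this; exact this
  rcases h1.1 with c1 | c1 <;> rcases h2.1 with c2 | c2 <;> rcases h3.1 with c3 | c3
  · exact Or.inl (key _ _ (c1.trans c2.symm) h1.1)
  · exact Or.inl (key _ _ (c1.trans c2.symm) h1.1)
  · exact Or.inr (Or.inl (key _ _ (c1.trans c3.symm) h1.1))
  · exact Or.inr (Or.inr (key _ _ (c2.trans c3.symm) (Or.inr c2)))
  · exact Or.inr (Or.inr (key _ _ (c2.trans c3.symm) (Or.inl c2)))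
  · exact Or.inr (Or.inl (key _ _ (c1.trans c3.symm) h1.1))
  · exact Or.inl (key _ _ (c1.trans c2.symm) h1.1)
  · exact Or.inl (key _ _ (c1.trans c2.symm) h1.1)

/-- a vertex at which `b` is free is an endpoint of its `(a,b)`-chain -/
lemma endpoint_of_free {D : ℕ} {π : Sym2 V → Option (Fin D)} (hp : Proper2 π) {a b : Fin D}
    {u : V} (hf : freeAt π u b) : chainEndpoint π a b u := by
  intro w₁ hw₁ w₂ hw₂
  rw [mem_neighborSet, chainGraph_adj] at hw₁ hw₂
  have c1 : π s(u,w₁) = some a := by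
    rcases hw₁.1 with h | h; exact h; exact absurd h (hf _ (Sym2.mem_mk_left u w₁))
  have c2 : π s(u,w₂) = some a := by
    rcases hw₂.1 with h | h; exact h; exact absurd h (hf _ (Sym2.mem_mk_left u w₂))
  have := unique_color hp c1 c2 (Sym2.mem_mk_left u w₁) (Sym2.mem_mk_left u w₂)
  rwa [Sym2.congr_right] at this

/-- membership in a set closed under adjacency propagates along reachability -/
lemma reach_mem_closed {H : SimpleGraph V} {A : Set V}
    (hA : ∀ u ∈ A, ∀ w, H.Adj u w → w ∈ A) {u w : V} (hu : u ∈ A) (h : H.Reachable u w) :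
    w ∈ A := by
  obtain ⟨p⟩ := h
  induction p with
  | nil => exact hu
  | cons hadj p ih => exact ih (hA _ hu _ hadj)

end Helpers
section Paths
open SimpleGraph
variable {V : Type} {H : SimpleGraph V}

lemma forced_prefix
    (hdeg : ∀ v w₁ w₂ w₃ : V, H.Adj v w₁ → H.Adj v w₂ → H.Adj v w₃ →
      w₁ = w₂ ∨ w₁ = w₃ ∨ w₂ = w₃) :
    ∀ (n : ℕ) {u z w : V} (r : H.Walk u w) (q : H.Walk u z), r.length = n →
      r.IsPath → q.IsPath →
      ((∀ s₁ s₂ : V, H.Adj u s₁ → H.Adj u s₂ → s₁ = s₂) ∨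
        ∃ t, H.Adj t u ∧ t ∉ q.support ∧ t ∉ r.support) →
      r.length ≤ q.length → r.support <+: q.support := by
  intro n
  induction n with
  | zero =>
    intro u z w r q hlen hr hq hside hle
    cases r with
    | nil =>
      rw [Walk.support_nil]
      rw [Walk.support_eq_cons q]
      exact ⟨q.support.tail, rfl⟩
    | cons h r' => simp [Walk.length_cons] at hlen
  | succ n ih =>
    intro u z w r q hlen hr hq hside hle
    cases r with
    | nil => simp [Walk.length_nil] at hlen
    | cons hadj r' =>
      rename_i α
      cases q with
      | nil =>
        rw [Walk.length_cons] at hle; simp [Walk.length_nil] at hle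
      | cons hadj₂ q' =>
        rename_i β
        -- show α = β
        have hαβ : α = β := by
          rcases hside with hend | ⟨t, ht, htq, htr⟩
          · exact hend _ _ hadj hadj₂
          · rcases hdeg u t α β ht.symm hadj hadj₂ with h | h | h
            · exact absurd (h ▸ Walk.start_mem_support r' : t ∈ r'.support)
                (fun hm => htr (by rw [Walk.support_cons]; exact List.mem_cons_of_mem _ hm))
            · exact absurd (h ▸ Walk.start_mem_support q' : t ∈ q'.support)
                (fun hm => htq (by rw [Walk.support_cons]; exact List.mem_cons_of_mem _ hm))
            · exact h
        subst hαβ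
        have hr' : r'.IsPath ∧ u ∉ r'.support := (Walk.cons_isPath_iff hadj r').mp hr
        have hq' : q'.IsPath ∧ u ∉ q'.support := (Walk.cons_isPath_iff hadj₂ q').mp hq
        have hlen' : r'.length = n := by
          rw [Walk.length_cons] at hlen; omega
        have hle' : r'.length ≤ q'.length := by
          rw [Walk.length_cons, Walk.length_cons] at hle; omega
        have hpre := ih r' q' hlen' hr'.1 hq'.1
          (Or.inr ⟨u, hadj, hq'.2, hr'.2⟩) hle'
        rw [Walk.support_cons, Walk.support_cons]
        obtain ⟨tl, htl⟩ := hpre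
        exact ⟨tl, by rw [List.cons_append, htl]⟩

lemma interior_two_nbrs [DecidableEq V] {x z y : V} (q : H.Walk x z) (hq : q.IsPath)
    (hy : y ∈ q.support) (hyx : y ≠ x) (hyz : y ≠ z)
    (hsub : (H.neighborSet y).Subsingleton) : False := by
  have hspec := q.take_spec hy
  set t := q.takeUntil y hy with htdef
  set d := q.dropUntil y hy with hddef
  have hsupp : q.support = t.support ++ d.support.tail := by
    conv_lhs => rw [← hspec]
    rw [Walk.support_append]
  -- next neighbor from d
  cases hd : d with
  | nil => exact hyz (Walk.Nil.eq (hd ▸ Walk.nil_nil))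
  | cons hadj d' =>
    rename_i n₁
    -- previous neighbor from t.reverse
    have hyx' : y ≠ x := hyx
    cases ht : t.reverse with
    | nil =>
      have : t.length = 0 := by
        have := congrArg Walk.length ht
        rw [Walk.length_reverse] at this
        simpa using this
      have := Walk.eq_of_length_eq_zero this
      exact hyx this.symm
    | cons hadj₀ t' =>
      rename_i n₀
      have hn₀t : n₀ ∈ t.support := by
        have : n₀ ∈ t.reverse.support := by
          rw [ht, Walk.support_cons]
          exact List.mem_cons_of_mem _ (Walk.start_mem_support t')
        rwa [Walk.support_reverse, List.mem_reverse] at this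
      have hn₁d : n₁ ∈ d.support.tail := by
        rw [hd, Walk.support_cons]
        exact Walk.start_mem_support d'
      have heq : n₀ = n₁ := hsub (by exact hadj₀ : H.Adj y n₀) (by exact hadj : H.Adj y n₁)
      have hnd : q.support.Nodup := hq.support_nodup
      rw [hsupp] at hnd
      exact (List.disjoint_of_nodup_append hnd) hn₀t (heq ▸ hn₁d)

/-- Three distinct endpoints cannot lie on one `(a,b)`-chain. -/
lemma three_endpoints [DecidableEq V] {D : ℕ} {π : Sym2 V → Option (Fin D)} (hp : Proper2 π)
    {a b : Fin D} {x y z : V} (hx : chainEndpoint π a b x) (hy : chainEndpoint π a b y)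
    (hz : chainEndpoint π a b z) (hxy : x ≠ y) (hxz : x ≠ z) (hyz : y ≠ z)
    (rxy : chainReach π a b x y) (rxz : chainReach π a b x z) : False := by
  set H : SimpleGraph V := chainGraph π a b with hH
  have hdeg : ∀ v w₁ w₂ w₃ : V, H.Adj v w₁ → H.Adj v w₂ → H.Adj v w₃ →
      w₁ = w₂ ∨ w₁ = w₃ ∨ w₂ = w₃ := fun v w₁ w₂ w₃ h1 h2 h3 =>
    chain_deg_le_two hp h1 h2 h3
  obtain ⟨wy⟩ := rxy
  obtain ⟨wz⟩ := rxz
  set py : H.Walk x y := wy.bypass with hpy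
  set pz : H.Walk x z := wz.bypass with hpz
  have hpyp : py.IsPath := Walk.bypass_isPath wy
  have hpzp : pz.IsPath := Walk.bypass_isPath wz
  have hendx : ∀ s₁ s₂ : V, H.Adj x s₁ → H.Adj x s₂ → s₁ = s₂ := fun s₁ s₂ h1 h2 => hx h1 h2
  rcases le_total py.length pz.length with hle | hle
  · have hpre := forced_prefix hdeg py.length py pz rfl hpyp hpzp (Or.inl hendx) hle
    have hymem : y ∈ pz.support := hpre.subset (Walk.end_mem_support py)
    exact interior_two_nbrs pz hpzp hymem (Ne.symm hxy) hyz hy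
  · have hpre := forced_prefix hdeg pz.length pz py rfl hpzp hpyp (Or.inl hendx) hle
    have hzmem : z ∈ py.support := hpre.subset (Walk.end_mem_support pz)
    exact interior_two_nbrs py hpyp hzmem (Ne.symm hxz) (Ne.symm hyz) hz

end Paths
section Surgery
open SimpleGraph
open scoped Classical
variable {V : Type} {G : SimpleGraph V}

/-- override a coloring by a (partial, functional) assignment relation -/
noncomputable def ovr (base : Sym2 V → Option (Fin 8)) (Asg : Sym2 V → Option (Fin 8) → Prop) :
    Sym2 V → Option (Fin 8) :=
  fun e => if h : ∃ c, Asg e c then h.choose else base e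

lemma ovr_eq_of {base : Sym2 V → Option (Fin 8)} {Asg : Sym2 V → Option (Fin 8) → Prop}
    (hfun : ∀ e c c', Asg e c → Asg e c' → c = c') {e : Sym2 V} {c : Option (Fin 8)}
    (h : Asg e c) : ovr base Asg e = c := by
  have hex : ∃ c, Asg e c := ⟨c, h⟩
  rw [ovr, dif_pos hex]
  exact hfun e _ _ hex.choose_spec h

lemma ovr_eq_base {base : Sym2 V → Option (Fin 8)} {Asg : Sym2 V → Option (Fin 8) → Prop}
    {e : Sym2 V} (h : ¬ ∃ c, Asg e c) : ovr base Asg e = base e := dif_neg h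

lemma ovr_proper {base : Sym2 V → Option (Fin 8)} {Asg : Sym2 V → Option (Fin 8) → Prop}
    (hbase : IsProperPEC G 8 base)
    (hfun : ∀ e c c', Asg e c → Asg e c' → c = c')
    (hedge : ∀ e c, Asg e c → e ∈ G.edgeSet ∧ c ≠ none)
    (hcompat : ∀ e₁ e₂ c, Asg e₁ c → Asg e₂ c → e₁ ≠ e₂ → ¬ ∃ v, v ∈ e₁ ∧ v ∈ e₂)
    (hfree : ∀ e c, Asg e c → ∀ v, v ∈ e → ∀ e', v ∈ e' → (¬ ∃ c', Asg e' c') →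
      base e' ≠ c) :
    IsProperPEC G 8 (ovr base Asg) := by
  constructor
  · intro e he
    by_cases h : ∃ c, Asg e c
    · exact (hedge e _ h.choose_spec).1
    · rw [ovr_eq_base h] at he
      exact hbase.1 e he
  · intro e₁ e₂ hne hshare h1 heq
    obtain ⟨v, hv1, hv2⟩ := hshare
    by_cases a1 : ∃ c, Asg e₁ c <;> by_cases a2 : ∃ c, Asg e₂ c
    · obtain ⟨c₁, hc₁⟩ := a1
      have he1 : ovr base Asg e₁ = c₁ := ovr_eq_of hfun hc₁
      obtain ⟨c₂, hc₂⟩ := a2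
      have he2 : ovr base Asg e₂ = c₂ := ovr_eq_of hfun hc₂
      rw [he1, he2] at heq
      exact hcompat e₁ e₂ c₂ (heq ▸ hc₁) hc₂ hne ⟨v, hv1, hv2⟩
    · obtain ⟨c₁, hc₁⟩ := a1
      have he1 : ovr base Asg e₁ = c₁ := ovr_eq_of hfun hc₁
      rw [he1, ovr_eq_base a2] at heq
      exact hfree e₁ c₁ hc₁ v hv1 e₂ hv2 a2 heq.symm
    · obtain ⟨c₂, hc₂⟩ := a2
      have he2 : ovr base Asg e₂ = c₂ := ovr_eq_of hfun hc₂
      rw [ovr_eq_base a1, he2] at heq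
      exact hfree e₂ c₂ hc₂ v hv2 e₁ hv1 a1 heq
    · rw [ovr_eq_base a1, ovr_eq_base a2] at heq
      rw [ovr_eq_base a1] at h1
      exact hbase.2 e₁ e₂ hne ⟨v, hv1, hv2⟩ h1 heq

/-- Kempe flip of colors `a, b` on the edges meeting the region `R`. -/
noncomputable def flp (a b : Fin 8) (R : Set V) (base : Sym2 V → Option (Fin 8)) :
    Sym2 V → Option (Fin 8) :=
  fun e => if (base e = some a ∨ base e = some b) ∧ ∃ v, v ∈ e ∧ v ∈ R then
    (if base e = some a then some b else some a) else base e

/-- the closure property of a flip region -/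
def FlipClosed (a b : Fin 8) (R : Set V) (base : Sym2 V → Option (Fin 8)) : Prop :=
  ∀ u ∈ R, ∀ e : Sym2 V, u ∈ e → (base e = some a ∨ base e = some b) → ∀ w ∈ e, w ∈ R

variable {a b : Fin 8} {R : Set V} {base : Sym2 V → Option (Fin 8)}

lemma flp_eq_base_of_not_chain {e : Sym2 V} (h : ¬ (base e = some a ∨ base e = some b)) :
    flp a b R base e = base e := by
  rw [flp, if_neg (fun hc => h hc.1)]

lemma flp_none_iff {e : Sym2 V} : flp a b R base e = none ↔ base e = none := by
  rw [flp]
  split_ifs with h h2 <;> simp_all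

lemma flp_eq_some {e : Sym2 V} {k : Fin 8} (h : flp a b R base e = some k) :
    (base e = some k ∧ ¬ ((base e = some a ∨ base e = some b) ∧ ∃ v, v ∈ e ∧ v ∈ R)) ∨
    ((∃ v, v ∈ e ∧ v ∈ R) ∧ ((k = b ∧ base e = some a) ∨ (k = a ∧ base e = some b))) := by
  rw [flp] at h
  split_ifs at h with h1 h2
  · right
    refine ⟨h1.2, Or.inl ⟨by simpa using h.symm, h2⟩⟩
  · right
    refine ⟨h1.2, Or.inr ⟨by simpa using h.symm, ?_⟩⟩
    rcases h1.1 with hh | hh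
    · exact absurd hh h2
    · exact hh
  · exact Or.inl ⟨h, h1⟩

lemma flp_proper (hab : a ≠ b) (hbase : IsProperPEC G 8 base)
    (hR : FlipClosed a b R base) : IsProperPEC G 8 (flp a b R base) := by
  constructor
  · intro e he
    exact hbase.1 e (fun hn => he (by rw [flp_none_iff]; exact hn))
  · intro e₁ e₂ hne hshare h1 heq
    obtain ⟨v, hv1, hv2⟩ := hshare
    have h1' : ∃ k, flp a b R base e₁ = some k := by
      cases h : flp a b R base e₁
      · exact absurd h h1
      · exact ⟨_, rfl⟩
    obtain ⟨k, hk1⟩ := h1'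
    have hk2 : flp a b R base e₂ = some k := by rw [← heq, hk1]
    rcases flp_eq_some hk1 with ⟨hb1, hnc1⟩ | ⟨⟨u₁, hu₁e, hu₁R⟩, hc1⟩ <;>
      rcases flp_eq_some hk2 with ⟨hb2, hnc2⟩ | ⟨⟨u₂, hu₂e, hu₂R⟩, hc2⟩
    · exact hbase.2 e₁ e₂ hne ⟨v, hv1, hv2⟩ (by simp [hb1]) (by rw [hb1, hb2])
    · -- e₁ unflipped with color k, e₂ flipped: k ∈ {a,b} so e₁ is a chain edge
      -- then v ∈ R via e₂'s closure, so e₁ also touches R: contradiction with hnc1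
      have hvR : v ∈ R := by
        rcases hc2 with ⟨_, hc⟩ | ⟨_, hc⟩ <;> exact hR u₂ hu₂R e₂ hu₂e (by simp [hc]) v hv2
      have hkab : base e₁ = some a ∨ base e₁ = some b := by
        rcases hc2 with ⟨hk, _⟩ | ⟨hk, _⟩
        · exact Or.inr (by rw [hb1, hk])
        · exact Or.inl (by rw [hb1, hk])
      exact hnc1 ⟨hkab, v, hv1, hvR⟩
    · have hvR : v ∈ R := by
        rcases hc1 with ⟨_, hc⟩ | ⟨_, hc⟩ <;> exact hR u₁ hu₁R e₁ hu₁e (by simp [hc]) v hv1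
      have hkab : base e₂ = some a ∨ base e₂ = some b := by
        rcases hc1 with ⟨hk, _⟩ | ⟨hk, _⟩
        · exact Or.inr (by rw [hb2, hk])
        · exact Or.inl (by rw [hb2, hk])
      exact hnc2 ⟨hkab, v, hv2, hvR⟩
    · -- both flipped: base colors must be distinct but flipping is injective
      rcases hc1 with ⟨hk1', hc1'⟩ | ⟨hk1', hc1'⟩ <;> rcases hc2 with ⟨hk2', hc2'⟩ | ⟨hk2', hc2'⟩
      · exact hbase.2 e₁ e₂ hne ⟨v, hv1, hv2⟩ (by simp [hc1']) (by rw [hc1', hc2'])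
      · exact hab (by rw [← hk2', hk1'])
      · exact hab (by rw [← hk1', hk2'])
      · exact hbase.2 e₁ e₂ hne ⟨v, hv1, hv2⟩ (by simp [hc1']) (by rw [hc1', hc2'])

end Surgery
section Util
open SimpleGraph
variable {V : Type} {G : SimpleGraph V}

lemma sym2_eq_of_mem {e : Sym2 V} {u w : V} (hu : u ∈ e) (hw : w ∈ e) (hne : u ≠ w) :
    e = s(u, w) := (Sym2.mem_and_mem_iff hne).mp ⟨hu, hw⟩

lemma edgeDist_intro {e₁ e₂ : Sym2 V} {u u' : V} (hu : u ∈ e₁) (hu' : u' ∈ e₂)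
    (w : G.Walk u u') (hw : w.length ≤ 4) : edgeDistLE G 4 e₁ e₂ :=
  ⟨u, hu, u', hu', w, hw⟩

/-- region generated by chain reachability from a seed set is flip-closed -/
lemma flipClosed_of_seeds {a b : Fin 8} {base : Sym2 V → Option (Fin 8)} (T : Set V) :
    FlipClosed a b {u | ∃ s ∈ T, chainReach base a b s u} base := by
  rintro u ⟨s, hs, hreach⟩ e hue hcol w hwe
  by_cases hw : w = u
  · exact ⟨s, hs, hw ▸ hreach⟩
  · have hadj : (chainGraph base a b).Adj u w := by
      rw [chainGraph_adj]
      refine ⟨?_, fun h => hw h.symm⟩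
      rwa [← sym2_eq_of_mem hue hwe (fun h => hw h.symm)]
    exact ⟨s, hs, hreach.trans hadj.reachable⟩

lemma mem_flip_region {a b : Fin 8} {base : Sym2 V → Option (Fin 8)} {T : Set V} {u : V}
    (h : u ∈ {u | ∃ s ∈ T, chainReach base a b s u}) :
    ∃ s ∈ T, chainReach base a b s u := h

/-- final assembly: overriding a support-preserving proper recoloring by the new edges -/
lemma assemble {π σ₂ : Sym2 V → Option (Fin 8)} {S : Set (V × V)}
    {Asg : Sym2 V → Option (Fin 8) → Prop}
    (hσ₂ : IsProperPEC G 8 σ₂) (hnone : ∀ e, σ₂ e = none ↔ π e = none)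
    (hfun : ∀ e c c', Asg e c → Asg e c' → c = c')
    (hedge : ∀ e c, Asg e c → e ∈ G.edgeSet ∧ c ≠ none)
    (hcompat : ∀ e₁ e₂ c, Asg e₁ c → Asg e₂ c → e₁ ≠ e₂ → ¬ ∃ v, v ∈ e₁ ∧ v ∈ e₂)
    (hfree : ∀ e c, Asg e c → ∀ v, v ∈ e → ∀ e', v ∈ e' → (¬ ∃ c', Asg e' c') →
      σ₂ e' ≠ c)
    (hdom : ∀ e c, Asg e c → π e ≠ none ∨ ∃ p ∈ S, e = s(p.1, p.2))
    (hcover : ∀ p ∈ S, ∃ c, Asg s(p.1, p.2) c) :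
    ∃ σ : Sym2 V → Option (Fin 8), IsProperPEC G 8 σ ∧
      ∀ e, (σ e ≠ none ↔ (π e ≠ none ∨ ∃ p ∈ S, e = s(p.1, p.2))) := by
  refine ⟨ovr σ₂ Asg, ovr_proper hσ₂ hfun hedge hcompat hfree, fun e => ?_⟩
  by_cases h : ∃ c, Asg e c
  · obtain ⟨c, hc⟩ := h
    rw [ovr_eq_of hfun hc]
    simp only [(hedge e c hc).2, ne_eq, not_false_iff, true_iff]
    exact hdom e c hc
  · rw [ovr_eq_base h]
    constructor
    · intro hne
      exact Or.inl (fun hn => hne ((hnone e).mpr hn))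
    · rintro (hp | ⟨p, hp, hep⟩)
      · exact fun hn => hp ((hnone e).mp hn)
      · exact absurd (hep ▸ hcover p hp) h

end Util
section Comm
open SimpleGraph
variable {V : Type} {D : ℕ} {π : Sym2 V → Option (Fin D)} {a b : Fin D}

lemma chainGraph_comm : chainGraph π a b = chainGraph π b a := by
  unfold chainGraph
  congr 1
  ext e
  exact or_comm

lemma chainEndpoint_comm {v : V} : chainEndpoint π a b v ↔ chainEndpoint π b a v := by
  unfold chainEndpoint
  rw [chainGraph_comm]

lemma chainReach_comm {u v : V} : chainReach π a b u v ↔ chainReach π b a u v := by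
  unfold chainReach
  rw [chainGraph_comm]

/-- a vertex at which `a` is free is an endpoint of its `(a,b)`-chain -/
lemma endpoint_of_free' (hp : Proper2 π) {u : V} (hf : freeAt π u a) :
    chainEndpoint π a b u :=
  chainEndpoint_comm.mpr (endpoint_of_free hp hf)

end Comm

section NotEndpoint
open SimpleGraph
variable {V : Type} {D : ℕ} {π : Sym2 V → Option (Fin D)} {a b : Fin D}

/-- a non-endpoint of the chain graph has an incident `b`-colored edge -/
lemma b_edge_of_not_endpoint (hp : Proper2 π) {u : V} (h : ¬ chainEndpoint π a b u) :
    ∃ w : V, π s(u, w) = some b := by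
  rw [chainEndpoint, Set.not_subsingleton_iff] at h
  obtain ⟨w₁, hw₁, w₂, hw₂, hne⟩ := h
  rw [SimpleGraph.mem_neighborSet, chainGraph_adj] at hw₁ hw₂
  rcases hw₁.1 with h1 | h1
  · rcases hw₂.1 with h2 | h2
    · exfalso
      have := unique_color hp h1 h2 (Sym2.mem_mk_left u w₁) (Sym2.mem_mk_left u w₂)
      rw [Sym2.congr_right] at this
      exact hne this
    · exact ⟨w₂, h2⟩
  · exact ⟨w₁, h1⟩

end NotEndpoint
section Walks
open SimpleGraph
variable {V : Type} {G : SimpleGraph V}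

lemma walk_of_mem_edge {e : Sym2 V} (he : e ∈ G.edgeSet) {u v : V} (hu : u ∈ e) (hv : v ∈ e) :
    ∃ w : G.Walk u v, w.length ≤ 1 := by
  by_cases h : u = v
  · subst h; exact ⟨Walk.nil, by simp⟩
  · have heq : e = s(u, v) := sym2_eq_of_mem hu hv h
    rw [heq, SimpleGraph.mem_edgeSet] at he
    exact ⟨Walk.cons he Walk.nil, by simp⟩

lemma edgeDist_of_common {e₁ e₂ : Sym2 V} {v u u' : V} (hu : u ∈ e₁) (hu' : u' ∈ e₂)
    (w1 : G.Walk u v) (w2 : G.Walk u' v) (h1 : w1.length ≤ 2) (h2 : w2.length ≤ 2) :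
    edgeDistLE G 4 e₁ e₂ := by
  refine edgeDist_intro hu hu' (w1.append w2.reverse) ?_
  rw [Walk.length_append, Walk.length_reverse]
  omega

end Walks

section Iso
open SimpleGraph
variable {V : Type}

lemma reachable_eq_of_isolated {H : SimpleGraph V} {u v : V} (h : ∀ w, ¬ H.Adj u w)
    (hr : H.Reachable u v) : u = v := by
  obtain ⟨p⟩ := hr
  cases p with
  | nil => rfl
  | cons hadj _ => exact absurd hadj (h _)

end Iso
/-- A pairwise 4-independent and `T`-chain independent family of uncolored butterfly-like
edges of the same type `T ∈ {0, 1_{ab}, 3_{ab}, 4_{ab}, 5_{ab}, 6_{abcd}}` can all be colored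
at once. -/
theorem stmt13 {V : Type} [Fintype V] [DecidableEq V] (G : SimpleGraph V) [DecidableRel G.Adj]
    (hΔ : G.maxDegree ≤ 8) (π : Sym2 V → Option (Fin 8)) (hπ : IsProperPEC G 8 π)
    (tag : TypeTag) (a b c d : Fin 8)
    (habcd : a ≠ b ∧ a ≠ c ∧ a ≠ d ∧ b ≠ c ∧ b ≠ d ∧ c ≠ d)
    (S : Set (V × V))
    (hS : ∀ p ∈ S, G.Adj p.1 p.2 ∧ π s(p.1, p.2) = none ∧
      IsButterflyLikeAt G p.1 p.2 ∧ HasTypeTag G π tag a b c d p.1 p.2)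
    (hind : ∀ p ∈ S, ∀ q ∈ S, p ≠ q →
      ¬ edgeDistLE G 4 s(p.1, p.2) s(q.1, q.2) ∧
        TagChainIndep G π tag a b c d s(p.1, p.2) s(q.1, q.2)) :
    ∃ σ : Sym2 V → Option (Fin 8), IsProperPEC G 8 σ ∧
      ∀ e, (σ e ≠ none ↔ (π e ≠ none ∨ ∃ p ∈ S, e = s(p.1, p.2))) := by
  classical
  obtain ⟨hab, hac, had, hbc, hbd, hcd⟩ := habcd
  -- distinct elements of S give distinct, far-apart pairs
  have hfar : ∀ (p : {p // p ∈ S}) (q : {p // p ∈ S}), p ≠ q →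
      ¬ edgeDistLE G 4 s(p.1.1, p.1.2) s(q.1.1, q.1.2) :=
    fun p q hne => (hind p.1 p.2 q.1 q.2 (fun h => hne (Subtype.ext h))).1
  cases tag with
  | t1 =>
    have hT : ∀ p : {p // p ∈ S}, G.Adj p.1.1 p.1.2 ∧ π s(p.1.1, p.1.2) = none ∧
        HasType1 π p.1.1 p.1.2 a b :=
      fun p => ⟨(hS p.1 p.2).1, (hS p.1 p.2).2.1, (hS p.1 p.2).2.2.2⟩
    have hCI : ∀ (p : {p // p ∈ S}) (q : {p // p ∈ S}), p ≠ q →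
        ChainIndep G π a b s(p.1.1, p.1.2) s(q.1.1, q.1.2) :=
      fun p q hne => (hind p.1 p.2 q.1 q.2 (fun h => hne (Subtype.ext h))).2
    -- endpoints
    have hxend : ∀ p : {p // p ∈ S}, chainEndpoint π a b p.1.1 :=
      fun p => endpoint_of_free' hπ.p2 (hT p).2.2.1
    have hyend : ∀ p : {p // p ∈ S}, chainEndpoint π a b p.1.2 :=
      fun p => endpoint_of_free hπ.p2 (hT p).2.2.2.1
    -- the flip region: chains through the `y` endpoints
    set T : Set V := Set.range (fun p : {p // p ∈ S} => p.1.2) with hTdef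
    set R : Set V := {u | ∃ s ∈ T, chainReach π a b s u} with hRdef
    have hRclosed : FlipClosed a b R π := flipClosed_of_seeds T
    set σ₂ : Sym2 V → Option (Fin 8) := flp a b R π with hσ₂def
    have hσ₂p : IsProperPEC G 8 σ₂ := flp_proper hab hπ hRclosed
    -- the x and y endpoints are a-free after the flip
    have hfreex : ∀ (p : {p // p ∈ S}) (e' : Sym2 V), p.1.1 ∈ e' → σ₂ e' ≠ some a := by
      intro p e' hx he'
      rcases flp_eq_some he' with ⟨hcol, _⟩ | ⟨⟨u, hue, huR⟩, hc⟩
      · exact (hT p).2.2.1 e' hx hcol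
      · rcases hc with ⟨hk, _⟩ | ⟨_, hcol⟩
        · exact hab hk
        · -- x_p is in the flip region: some y_q's chain reaches it
          have hxR : p.1.1 ∈ R := hRclosed u huR e' hue (Or.inr hcol) p.1.1 hx
          obtain ⟨s, ⟨q, hq⟩, hreach⟩ := hxR
          subst hq
          by_cases hpq : p = q
          · subst hpq
            exact (hT p).2.2.2.2 ⟨hreach.symm, hxend p⟩
          · by_cases hxy : p.1.1 = q.1.2
            · exact hfar p q hpq (edgeDist_intro (Sym2.mem_mk_left _ _)
                (hxy ▸ Sym2.mem_mk_right q.1.1 q.1.2) Walk.nil (by simp))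
            · exact hCI p q hpq ⟨p.1.1, q.1.2,
                ⟨p.1.1, Sym2.mem_mk_left _ _, Walk.nil, by simp⟩,
                ⟨q.1.2, Sym2.mem_mk_right _ _, Walk.nil, by simp⟩,
                ⟨hxy, hreach.symm, hxend p, hyend q⟩⟩
    have hfreey : ∀ (p : {p // p ∈ S}) (e' : Sym2 V), p.1.2 ∈ e' → σ₂ e' ≠ some a := by
      intro p e' hy he'
      have hyR : p.1.2 ∈ R := ⟨p.1.2, ⟨p, rfl⟩, Reachable.refl _⟩
      rcases flp_eq_some he' with ⟨hcol, hnc⟩ | ⟨_, hc⟩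
      · exact hnc ⟨Or.inl hcol, p.1.2, hy, hyR⟩
      · rcases hc with ⟨hk, _⟩ | ⟨_, hcol⟩
        · exact hab hk
        · exact (hT p).2.2.2.1 e' hy hcol
    -- the assignment: color each new edge with a
    set Asg : Sym2 V → Option (Fin 8) → Prop :=
      fun e oc => ∃ p : {p // p ∈ S}, e = s(p.1.1, p.1.2) ∧ oc = some a with hAsgdef
    have hfun : ∀ e oc oc', Asg e oc → Asg e oc' → oc = oc' := by
      rintro e oc oc' ⟨p, _, rfl⟩ ⟨q, _, rfl⟩; rfl
    refine assemble hσ₂p (fun e => flp_none_iff) hfun ?_ ?_ ?_ ?_ ?_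
    · rintro e oc ⟨p, rfl, rfl⟩
      exact ⟨(hT p).1, by simp⟩
    · rintro e₁ e₂ oc ⟨p, rfl, rfl⟩ ⟨q, rfl, _⟩ hne ⟨v, hv1, hv2⟩
      have hpq : p ≠ q := fun h => hne (by rw [h])
      exact hfar p q hpq (edgeDist_intro hv1 hv2 Walk.nil (by simp))
    · rintro e oc ⟨p, rfl, rfl⟩ v hv e' hve' hna
      rcases Sym2.mem_iff.mp hv with rfl | rfl
      · exact hfreex p e' hve'
      · exact hfreey p e' hve'
    · rintro e oc ⟨p, rfl, rfl⟩
      exact Or.inr ⟨p.1, p.2, rfl⟩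
    · intro p hp
      exact ⟨some a, ⟨⟨p, hp⟩, rfl, rfl⟩⟩
  | t0 =>
    have hT : ∀ p : {p // p ∈ S}, G.Adj p.1.1 p.1.2 ∧ π s(p.1.1, p.1.2) = none ∧
        HasType0 G π p.1.1 p.1.2 :=
      fun p => ⟨(hS p.1 p.2).1, (hS p.1 p.2).2.1, (hS p.1 p.2).2.2.2⟩
    have hch : ∀ p : {p // p ∈ S}, ∃ σp : Sym2 V → Option (Fin 8), IsProperPEC G 8 σp ∧
        (∀ e, σp e ≠ none ↔ (π e ≠ none ∨ e = s(p.1.1, p.1.2))) ∧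
        (∀ e, ¬ edgeDistLE G 1 e s(p.1.1, p.1.2) → σp e = π e) := fun p => (hT p).2.2
    set σf : {p // p ∈ S} → Sym2 V → Option (Fin 8) := fun p => (hch p).choose with hσf
    have hσfp : ∀ p, IsProperPEC G 8 (σf p) := fun p => (hch p).choose_spec.1
    have hσfsupp : ∀ p e, σf p e ≠ none ↔ (π e ≠ none ∨ e = s(p.1.1, p.1.2)) :=
      fun p => (hch p).choose_spec.2.1
    have hσfloc : ∀ p e, ¬ edgeDistLE G 1 e s(p.1.1, p.1.2) → σf p e = π e :=
      fun p => (hch p).choose_spec.2.2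
    set Rg : Sym2 V → {p // p ∈ S} → Prop :=
      fun e p => edgeDistLE G 1 e s(p.1.1, p.1.2) with hRg
    -- two overlapping regions coincide
    have hD : ∀ (p q : {p // p ∈ S}) (e e' : Sym2 V) (v : V), Rg e p → Rg e' q →
        v ∈ e → v ∈ e' → e ∈ G.edgeSet → e' ∈ G.edgeSet → p = q := by
      rintro p q e e' v ⟨u, hue, u', hu'p, w1, hw1⟩ ⟨t, hte', t', ht'q, w2, hw2⟩ hv hv' hee hee'
      by_contra hpq
      apply hfar p q hpq
      obtain ⟨wb, hwb⟩ := walk_of_mem_edge hee hue hv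
      obtain ⟨wc, hwc⟩ := walk_of_mem_edge hee' hv' hte'
      refine edgeDist_intro hu'p ht'q (((w1.reverse.append wb).append wc).append w2) ?_
      simp only [Walk.length_append, Walk.length_reverse]
      omega
    set σ : Sym2 V → Option (Fin 8) := fun e => if h : ∃ p, Rg e p then σf h.choose e else π e
      with hσdef
    have hσin : ∀ (e) (h : ∃ p, Rg e p), σ e = σf h.choose e := fun e h => dif_pos h
    have hσout : ∀ e, (¬ ∃ p, Rg e p) → σ e = π e := fun e h => dif_neg h
    have hself : ∀ p : {p // p ∈ S}, Rg s(p.1.1, p.1.2) p :=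
      fun p => ⟨p.1.1, Sym2.mem_mk_left _ _, p.1.1, Sym2.mem_mk_left _ _, Walk.nil, by simp⟩
    refine ⟨σ, ⟨?_, ?_⟩, ?_⟩
    · intro e he
      by_cases h : ∃ p, Rg e p
      · rw [hσin e h] at he
        exact (hσfp h.choose).1 e he
      · rw [hσout e h] at he
        exact hπ.1 e he
    · intro e₁ e₂ hne hshare h1 heq
      obtain ⟨v, hv1, hv2⟩ := hshare
      by_cases a1 : ∃ p, Rg e₁ p <;> by_cases a2 : ∃ p, Rg e₂ p
      · rw [hσin e₁ a1] at h1 heq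
        rw [hσin e₂ a2] at heq
        have he1 : e₁ ∈ G.edgeSet := (hσfp a1.choose).1 e₁ h1
        have h2ne : σf a2.choose e₂ ≠ none := by
          rw [← heq]; exact h1
        have he2 : e₂ ∈ G.edgeSet := (hσfp a2.choose).1 e₂ h2ne
        have : a1.choose = a2.choose := hD _ _ e₁ e₂ v a1.choose_spec a2.choose_spec hv1 hv2 he1 he2
        rw [← this] at heq
        exact (hσfp a1.choose).2 e₁ e₂ hne ⟨v, hv1, hv2⟩ h1 heq
      · rw [hσin e₁ a1] at h1 heq
        rw [hσout e₂ a2] at heq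
        have h2 : σf a1.choose e₂ = π e₂ := hσfloc a1.choose e₂ (fun hr => a2 ⟨a1.choose, hr⟩)
        rw [← h2] at heq
        exact (hσfp a1.choose).2 e₁ e₂ hne ⟨v, hv1, hv2⟩ h1 heq
      · rw [hσout e₁ a1] at h1 heq
        rw [hσin e₂ a2] at heq
        have h2 : σf a2.choose e₁ = π e₁ := hσfloc a2.choose e₁ (fun hr => a1 ⟨a2.choose, hr⟩)
        rw [← h2] at h1 heq
        exact (hσfp a2.choose).2 e₁ e₂ hne ⟨v, hv1, hv2⟩ h1 heq
      · rw [hσout e₁ a1] at h1 heq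
        rw [hσout e₂ a2] at heq
        exact hπ.2 e₁ e₂ hne ⟨v, hv1, hv2⟩ h1 heq
    · intro e
      by_cases h : ∃ p, Rg e p
      · rw [hσin e h, hσfsupp h.choose e]
        constructor
        · rintro (hp | he)
          · exact Or.inl hp
          · exact Or.inr ⟨h.choose.1, h.choose.2, he⟩
        · rintro (hp | ⟨q, hq, rfl⟩)
          · exact Or.inl hp
          · set qq : {p // p ∈ S} := ⟨q, hq⟩ with hqq
            have he' : s(q.1, q.2) ∈ G.edgeSet := (G.mem_edgeSet).mpr (hT qq).1
            have : h.choose = qq := hD h.choose qq _ _ q.1 h.choose_spec (hself qq)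
              (Sym2.mem_mk_left _ _) (Sym2.mem_mk_left _ _) he' he'
            rw [this]
            exact Or.inr rfl
      · rw [hσout e h]
        constructor
        · exact Or.inl
        · rintro (hp | ⟨q, hq, rfl⟩)
          · exact hp
          · exact absurd ⟨⟨q, hq⟩, hself ⟨q, hq⟩⟩ h
  | t3 =>
    have hT : ∀ p : {p // p ∈ S}, G.Adj p.1.1 p.1.2 ∧ π s(p.1.1, p.1.2) = none ∧
        HasType3 G π p.1.1 p.1.2 a b :=
      fun p => ⟨(hS p.1 p.2).1, (hS p.1 p.2).2.1, (hS p.1 p.2).2.2.2⟩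
    have hCI : ∀ (p : {p // p ∈ S}) (q : {p // p ∈ S}), p ≠ q →
        ChainIndep G π a b s(p.1.1, p.1.2) s(q.1.1, q.1.2) :=
      fun p q hne => (hind p.1 p.2 q.1 q.2 (fun h => hne (Subtype.ext h))).2
    -- witnesses
    have hw : ∀ p : {p // p ∈ S}, ∃ w : Fin 8 × V, w.1 ≠ b ∧ freeAt π p.1.2 w.1 ∧
        G.Adj p.1.1 w.2 ∧ freeAt π w.2 b ∧ π s(p.1.1, w.2) = some w.1 := by
      intro p
      obtain ⟨γ, hγb, hγy, z, hadj, hzb, hcol⟩ := (hT p).2.2.2.2.2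
      exact ⟨⟨γ, z⟩, hγb, hγy, hadj, hzb, hcol⟩
    set γ : {p // p ∈ S} → Fin 8 := fun p => (hw p).choose.1 with hγdef
    set ζ : {p // p ∈ S} → V := fun p => (hw p).choose.2 with hζdef
    have hγb : ∀ p, γ p ≠ b := fun p => (hw p).choose_spec.1
    have hγy : ∀ p, freeAt π p.1.2 (γ p) := fun p => (hw p).choose_spec.2.1
    have hadjxz : ∀ p, G.Adj p.1.1 (ζ p) := fun p => (hw p).choose_spec.2.2.1
    have hζb : ∀ p, freeAt π (ζ p) b := fun p => (hw p).choose_spec.2.2.2.1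
    have hcolxz : ∀ p, π s(p.1.1, ζ p) = some (γ p) := fun p => (hw p).choose_spec.2.2.2.2
    have hfreexa : ∀ p : {p // p ∈ S}, freeAt π p.1.1 a := fun p => (hT p).2.2.1
    have hfreeyb : ∀ p : {p // p ∈ S}, freeAt π p.1.2 b := fun p => (hT p).2.2.2.1
    have hcpe : ∀ p : {p // p ∈ S}, chainPathEndpoints π a b p.1.1 p.1.2 :=
      fun p => (hT p).2.2.2.2.1
    have hγa : ∀ p, γ p ≠ a := fun p h =>
      hfreexa p s(p.1.1, ζ p) (Sym2.mem_mk_left _ _) (h ▸ hcolxz p)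
    have hζx : ∀ p, ζ p ≠ p.1.1 := fun p h => G.irrefl (h ▸ hadjxz p)
    have hζy : ∀ p, ζ p ≠ p.1.2 := by
      intro p h
      have := hcolxz p
      rw [h, (hT p).2.1] at this
      cases this
    have hxend : ∀ p : {p // p ∈ S}, chainEndpoint π a b p.1.1 :=
      fun p => endpoint_of_free' hπ.p2 (hfreexa p)
    have hyend : ∀ p : {p // p ∈ S}, chainEndpoint π a b p.1.2 :=
      fun p => endpoint_of_free hπ.p2 (hfreeyb p)
    have hζend : ∀ p : {p // p ∈ S}, chainEndpoint π a b (ζ p) :=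
      fun p => endpoint_of_free hπ.p2 (hζb p)
    -- near-vertex distance machinery
    have hnear : ∀ (q : {p // p ∈ S}) (v : V), v = q.1.1 ∨ v = q.1.2 ∨ v = ζ q →
        ∃ (u' : V) (w : G.Walk u' v), u' ∈ s(q.1.1, q.1.2) ∧ w.length ≤ 2 := by
      rintro q v (rfl | rfl | rfl)
      · exact ⟨q.1.1, Walk.nil, Sym2.mem_mk_left _ _, by simp⟩
      · exact ⟨q.1.2, Walk.nil, Sym2.mem_mk_right _ _, by simp⟩
      · exact ⟨q.1.1, Walk.cons (hadjxz q) Walk.nil, Sym2.mem_mk_left _ _, by simp⟩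
    have hfar2 : ∀ (p q : {p // p ∈ S}), p ≠ q → ∀ v : V,
        (v = p.1.1 ∨ v = p.1.2 ∨ v = ζ p) → (v = q.1.1 ∨ v = q.1.2 ∨ v = ζ q) → False := by
      intro p q hpq v h1 h2
      obtain ⟨u, w1, hu, hw1⟩ := hnear p v h1
      obtain ⟨u', w2, hu', hw2⟩ := hnear q v h2
      exact hfar p q hpq (edgeDist_of_common hu hu' w1 w2 hw1 hw2)
    -- flip region: chains through the x endpoints
    set T : Set V := Set.range (fun p : {p // p ∈ S} => p.1.1) with hTdef
    set R : Set V := {u | ∃ s ∈ T, chainReach π a b s u} with hRdef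
    have hRclosed : FlipClosed a b R π := flipClosed_of_seeds T
    set σ₂ : Sym2 V → Option (Fin 8) := flp a b R π with hσ₂def
    have hσ₂p : IsProperPEC G 8 σ₂ := flp_proper hab hπ hRclosed
    -- no vertex near a site belongs to another site's chain
    have hnotR : ∀ (p : {p // p ∈ S}) (v : V), chainEndpoint π a b v → v ≠ p.1.1 →
        v ≠ p.1.2 → (∀ q : {p // p ∈ S}, q ≠ p → v ≠ q.1.1 ∧ v ≠ q.1.2 ∧ v ≠ ζ q) →
        v ∉ R := by
      rintro p v hvend hvx hvy hvq ⟨s, ⟨q, rfl⟩, hreach⟩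
      by_cases hqp : q = p
      · subst hqp
        exact three_endpoints hπ.p2 (hxend q) (hyend q) hvend
          (hcpe q).1 (fun h => hvx h.symm) (fun h => hvy h.symm) (hcpe q).2.1 hreach
      · exact three_endpoints hπ.p2 (hxend q) (hyend q) hvend (hcpe q).1
          (fun h => (hvq q hqp).1 h.symm) (fun h => (hvq q hqp).2.1 h.symm)
          (hcpe q).2.1 hreach
    -- freeness facts after the flip
    have hF1 : ∀ (p : {p // p ∈ S}) (e' : Sym2 V), p.1.1 ∈ e' → σ₂ e' ≠ some b := by
      intro p e' hx he'
      have hxR : p.1.1 ∈ R := ⟨p.1.1, ⟨p, rfl⟩, Reachable.refl _⟩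
      rcases flp_eq_some he' with ⟨hcol, hnc⟩ | ⟨_, hc⟩
      · exact hnc ⟨Or.inr hcol, p.1.1, hx, hxR⟩
      · rcases hc with ⟨_, hcol⟩ | ⟨hk, _⟩
        · exact hfreexa p e' hx hcol
        · exact hab hk.symm
    have hF2 : ∀ (p : {p // p ∈ S}) (e' : Sym2 V), ζ p ∈ e' → σ₂ e' ≠ some b := by
      intro p e' hz he'
      rcases flp_eq_some he' with ⟨hcol, _⟩ | ⟨⟨u, hue, huR⟩, hc⟩
      · exact hζb p e' hz hcol
      · rcases hc with ⟨_, hcol⟩ | ⟨hk, _⟩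
        · -- ζ p would be on some chain through an x endpoint
          have hzR : ζ p ∈ R := hRclosed u huR e' hue (Or.inl hcol) (ζ p) hz
          refine hnotR p (ζ p) (hζend p) (hζx p) (hζy p) ?_ hzR
          intro q hqp
          exact ⟨fun h => hfar2 p q (fun hh => hqp hh.symm) (ζ p) (Or.inr (Or.inr rfl))
              (Or.inl h),
            fun h => hfar2 p q (fun hh => hqp hh.symm) (ζ p) (Or.inr (Or.inr rfl))
              (Or.inr (Or.inl h)),
            fun h => hfar2 p q (fun hh => hqp hh.symm) (ζ p) (Or.inr (Or.inr rfl))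
              (Or.inr (Or.inr h))⟩
        · exact hab hk.symm
    -- the assignment
    set Asg : Sym2 V → Option (Fin 8) → Prop := fun e oc => ∃ p : {p // p ∈ S},
      (e = s(p.1.1, ζ p) ∧ oc = some b) ∨ (e = s(p.1.1, p.1.2) ∧ oc = some (γ p))
      with hAsgdef
    have hAsgxz : ∀ p : {p // p ∈ S}, Asg s(p.1.1, ζ p) (some b) := fun p => ⟨p, Or.inl ⟨rfl, rfl⟩⟩
    have hF3 : ∀ (p : {p // p ∈ S}) (e' : Sym2 V), p.1.1 ∈ e' → (¬ ∃ c', Asg e' c') →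
        σ₂ e' ≠ some (γ p) := by
      intro p e' hx hna he'
      rcases flp_eq_some he' with ⟨hcol, _⟩ | ⟨_, hc⟩
      · have : e' = s(p.1.1, ζ p) :=
          unique_color hπ.p2 hcol (hcolxz p) hx (Sym2.mem_mk_left _ _)
        exact hna ⟨some b, this ▸ hAsgxz p⟩
      · rcases hc with ⟨hk, _⟩ | ⟨hk, _⟩
        · exact hγb p hk
        · exact hγa p hk
    have hF4 : ∀ (p : {p // p ∈ S}) (e' : Sym2 V), p.1.2 ∈ e' → σ₂ e' ≠ some (γ p) := by
      intro p e' hy he'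
      rcases flp_eq_some he' with ⟨hcol, _⟩ | ⟨_, hc⟩
      · exact hγy p e' hy hcol
      · rcases hc with ⟨hk, _⟩ | ⟨hk, _⟩
        · exact hγb p hk
        · exact hγa p hk
    have hfun : ∀ e oc oc', Asg e oc → Asg e oc' → oc = oc' := by
      have hcross : ∀ (p q : {p // p ∈ S}), p ≠ q → ∀ w : V,
          (s(p.1.1, w) = s(q.1.1, ζ q) ∨ s(p.1.1, w) = s(q.1.1, q.1.2)) → False := by
        rintro p q hpq w (he | he)
        · rcases Sym2.eq_iff.mp he with ⟨h1, _⟩ | ⟨h1, _⟩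
          · exact hfar2 p q hpq _ (Or.inl rfl) (Or.inl h1)
          · exact hfar2 p q hpq _ (Or.inl rfl) (Or.inr (Or.inr h1))
        · rcases Sym2.eq_iff.mp he with ⟨h1, _⟩ | ⟨h1, _⟩
          · exact hfar2 p q hpq _ (Or.inl rfl) (Or.inl h1)
          · exact hfar2 p q hpq _ (Or.inl rfl) (Or.inr (Or.inl h1))
      rintro e oc oc' ⟨p, (⟨rfl, rfl⟩ | ⟨rfl, rfl⟩)⟩ ⟨q, hq⟩ <;> by_cases hpq : p = q
      · subst hpq
        rcases hq with ⟨_, rfl⟩ | ⟨he, rfl⟩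
        · rfl
        · rcases Sym2.eq_iff.mp he with ⟨_, h2⟩ | ⟨_, h2⟩
          · exact absurd h2 (hζy p)
          · exact absurd h2 (hζx p)
      · exact absurd (hq.imp (fun h => h.1) (fun h => h.1)) (fun h => hcross p q hpq _ h)
      · subst hpq
        rcases hq with ⟨he, rfl⟩ | ⟨_, rfl⟩
        · rcases Sym2.eq_iff.mp he with ⟨_, h2⟩ | ⟨h1, _⟩
          · exact absurd h2.symm (hζy p)
          · exact absurd h1.symm (hζx p)
        · rfl
      · exact absurd (hq.imp (fun h => h.1) (fun h => h.1)) (fun h => hcross p q hpq _ h)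
    refine assemble hσ₂p (fun e => flp_none_iff) hfun ?_ ?_ ?_ ?_ ?_
    · rintro e oc ⟨p, (⟨rfl, rfl⟩ | ⟨rfl, rfl⟩)⟩
      · exact ⟨(G.mem_edgeSet).mpr (hadjxz p), by simp⟩
      · exact ⟨(G.mem_edgeSet).mpr (hT p).1, by simp⟩
    · rintro e₁ e₂ oc ⟨p, hp⟩ ⟨q, hq⟩ hne ⟨v, hv1, hv2⟩
      by_cases hpq : p = q
      · subst hpq
        rcases hp with ⟨rfl, rfl⟩ | ⟨rfl, rfl⟩ <;> rcases hq with ⟨he, hoc⟩ | ⟨he, hoc⟩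
        · exact hne he.symm
        · exact hγb p (Option.some_injective _ hoc).symm
        · exact hγb p (Option.some_injective _ hoc.symm).symm
        · exact hne he.symm
      · rcases hp with ⟨rfl, _⟩ | ⟨rfl, _⟩ <;> rcases hq with ⟨rfl, _⟩ | ⟨rfl, _⟩ <;>
          exact hfar2 p q hpq v
            (by rcases Sym2.mem_iff.mp hv1 with rfl | rfl
                · exact Or.inl rfl
                · simp)
            (by rcases Sym2.mem_iff.mp hv2 with rfl | rfl
                · exact Or.inl rfl
                · simp)
    · rintro e oc ⟨p, (⟨rfl, rfl⟩ | ⟨rfl, rfl⟩)⟩ v hv e' hve' hna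
      · rcases Sym2.mem_iff.mp hv with rfl | rfl
        · exact hF1 p e' hve'
        · exact hF2 p e' hve'
      · rcases Sym2.mem_iff.mp hv with rfl | rfl
        · exact hF3 p e' hve' hna
        · exact hF4 p e' hve'
    · rintro e oc ⟨p, (⟨rfl, rfl⟩ | ⟨rfl, rfl⟩)⟩
      · exact Or.inl (by rw [hcolxz p]; simp)
      · exact Or.inr ⟨p.1, p.2, rfl⟩
    · intro p hp
      exact ⟨some (γ ⟨p, hp⟩), ⟨⟨p, hp⟩, Or.inr ⟨rfl, rfl⟩⟩⟩
  | t4 =>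
    have hT : ∀ p : {p // p ∈ S}, G.Adj p.1.1 p.1.2 ∧ π s(p.1.1, p.1.2) = none ∧
        HasType4 G π p.1.1 p.1.2 a b :=
      fun p => ⟨(hS p.1 p.2).1, (hS p.1 p.2).2.1, (hS p.1 p.2).2.2.2⟩
    have hfreeya : ∀ p : {p // p ∈ S}, freeAt π p.1.2 a := fun p => (hT p).2.2.1
    have hfreeyb : ∀ p : {p // p ∈ S}, freeAt π p.1.2 b := fun p => (hT p).2.2.2.1
    have hcyc : ∀ p : {p // p ∈ S}, inChainCycle π a b p.1.1 := fun p => (hT p).2.2.2.2.1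
    have hw : ∀ p : {p // p ∈ S}, ∃ w : Fin 8 × V × V, freeAt π p.1.1 w.1 ∧
        w.2.1 ≠ w.2.2 ∧ w.2.1 ≠ p.1.1 ∧ w.2.1 ≠ p.1.2 ∧ w.2.2 ≠ p.1.1 ∧ w.2.2 ≠ p.1.2 ∧
        G.Adj p.1.1 w.2.2 ∧ G.Adj w.2.1 w.2.2 ∧ π s(p.1.1, w.2.2) = some a ∧
        π s(w.2.1, w.2.2) = some w.1 ∧ freeAt π w.2.1 b := by
      intro p
      obtain ⟨γ, hγ, z, v, h1, h2, h3, h4, h5, h6, h7, h8, h9, h10⟩ := (hT p).2.2.2.2.2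
      exact ⟨⟨γ, z, v⟩, hγ, h1, h2, h3, h4, h5, h6, h7, h8, h9, h10⟩
    set γ : {p // p ∈ S} → Fin 8 := fun p => (hw p).choose.1 with hγdef
    set ζ : {p // p ∈ S} → V := fun p => (hw p).choose.2.1 with hζdef
    set ν : {p // p ∈ S} → V := fun p => (hw p).choose.2.2 with hνdef
    have hγx : ∀ p, freeAt π p.1.1 (γ p) := fun p => (hw p).choose_spec.1
    have hζν : ∀ p, ζ p ≠ ν p := fun p => (hw p).choose_spec.2.1
    have hζx : ∀ p, ζ p ≠ p.1.1 := fun p => (hw p).choose_spec.2.2.1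
    have hζy : ∀ p, ζ p ≠ p.1.2 := fun p => (hw p).choose_spec.2.2.2.1
    have hνx : ∀ p, ν p ≠ p.1.1 := fun p => (hw p).choose_spec.2.2.2.2.1
    have hνy : ∀ p, ν p ≠ p.1.2 := fun p => (hw p).choose_spec.2.2.2.2.2.1
    have hadjxv : ∀ p, G.Adj p.1.1 (ν p) := fun p => (hw p).choose_spec.2.2.2.2.2.2.1
    have hadjzv : ∀ p, G.Adj (ζ p) (ν p) := fun p => (hw p).choose_spec.2.2.2.2.2.2.2.1
    have hcolxv : ∀ p, π s(p.1.1, ν p) = some a :=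
      fun p => (hw p).choose_spec.2.2.2.2.2.2.2.2.1
    have hcolzv : ∀ p, π s(ζ p, ν p) = some (γ p) :=
      fun p => (hw p).choose_spec.2.2.2.2.2.2.2.2.2.1
    have hζb : ∀ p, freeAt π (ζ p) b := fun p => (hw p).choose_spec.2.2.2.2.2.2.2.2.2.2
    have hγa : ∀ p, γ p ≠ a :=
      fun p h => hγx p _ (Sym2.mem_mk_left _ _) (by rw [hcolxv p, h])
    have hγb : ∀ p, γ p ≠ b := by
      intro p h
      obtain ⟨w, hwcol⟩ := b_edge_of_not_endpoint (a := a) hπ.p2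
        (hcyc p p.1.1 (Reachable.refl _))
      exact hγx p _ (Sym2.mem_mk_left p.1.1 w) (by rw [hwcol, h])
    have hζend : ∀ p : {p // p ∈ S}, chainEndpoint π a b (ζ p) :=
      fun p => endpoint_of_free hπ.p2 (hζb p)
    -- distance machinery
    have hnear : ∀ (q : {p // p ∈ S}) (v : V),
        v = q.1.1 ∨ v = q.1.2 ∨ v = ν q ∨ v = ζ q →
        ∃ (u' : V) (w : G.Walk u' v), u' ∈ s(q.1.1, q.1.2) ∧ w.length ≤ 2 := by
      rintro q v (rfl | rfl | rfl | rfl)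
      · exact ⟨q.1.1, Walk.nil, Sym2.mem_mk_left _ _, by simp⟩
      · exact ⟨q.1.2, Walk.nil, Sym2.mem_mk_right _ _, by simp⟩
      · exact ⟨q.1.1, Walk.cons (hadjxv q) Walk.nil, Sym2.mem_mk_left _ _, by simp⟩
      · exact ⟨q.1.1, Walk.cons (hadjxv q) (Walk.cons (hadjzv q).symm Walk.nil),
          Sym2.mem_mk_left _ _, by simp⟩
    have hfar2 : ∀ (p q : {p // p ∈ S}), p ≠ q → ∀ v : V,
        (v = p.1.1 ∨ v = p.1.2 ∨ v = ν p ∨ v = ζ p) →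
        (v = q.1.1 ∨ v = q.1.2 ∨ v = ν q ∨ v = ζ q) → False := by
      intro p q hpq v h1 h2
      obtain ⟨u, w1, hu, hw1⟩ := hnear p v h1
      obtain ⟨u', w2, hu', hw2⟩ := hnear q v h2
      exact hfar p q hpq (edgeDist_of_common hu hu' w1 w2 hw1 hw2)
    -- flip region: the (a,b)-cycles through the x's
    set T : Set V := Set.range (fun p : {p // p ∈ S} => p.1.1) with hTdef
    set R : Set V := {u | ∃ s ∈ T, chainReach π a b s u} with hRdef
    have hRclosed : FlipClosed a b R π := flipClosed_of_seeds T
    set σ₂ : Sym2 V → Option (Fin 8) := flp a b R π with hσ₂def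
    have hσ₂p : IsProperPEC G 8 σ₂ := flp_proper hab hπ hRclosed
    set Asg : Sym2 V → Option (Fin 8) → Prop := fun e oc => ∃ p : {p // p ∈ S},
      (e = s(p.1.1, ν p) ∧ oc = some (γ p)) ∨ (e = s(ζ p, ν p) ∧ oc = some b) ∨
      (e = s(p.1.1, p.1.2) ∧ oc = some b) with hAsgdef
    have hvertsAsg : ∀ (p : {p // p ∈ S}) (e : Sym2 V) (oc : Option (Fin 8)),
        ((e = s(p.1.1, ν p) ∧ oc = some (γ p)) ∨ (e = s(ζ p, ν p) ∧ oc = some b) ∨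
          (e = s(p.1.1, p.1.2) ∧ oc = some b)) → ∀ v, v ∈ e →
        (v = p.1.1 ∨ v = p.1.2 ∨ v = ν p ∨ v = ζ p) := by
      rintro p e oc (⟨rfl, _⟩ | ⟨rfl, _⟩ | ⟨rfl, _⟩) v hv <;>
        rcases Sym2.mem_iff.mp hv with rfl | rfl <;> simp
    -- freeness facts
    have hF1 : ∀ (p : {p // p ∈ S}) (e' : Sym2 V), p.1.1 ∈ e' → (¬ ∃ c', Asg e' c') →
        σ₂ e' ≠ some b := by
      intro p e' hx hna he'
      have hxR : p.1.1 ∈ R := ⟨p.1.1, ⟨p, rfl⟩, Reachable.refl _⟩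
      rcases flp_eq_some he' with ⟨hcol, hnc⟩ | ⟨_, hc⟩
      · exact hnc ⟨Or.inr hcol, p.1.1, hx, hxR⟩
      · rcases hc with ⟨_, hcol⟩ | ⟨hk, _⟩
        · have : e' = s(p.1.1, ν p) :=
            unique_color hπ.p2 hcol (hcolxv p) hx (Sym2.mem_mk_left _ _)
          exact hna ⟨some (γ p), ⟨p, Or.inl ⟨this, rfl⟩⟩⟩
        · exact hab hk.symm
    have hF2 : ∀ (p : {p // p ∈ S}) (e' : Sym2 V), p.1.2 ∈ e' → σ₂ e' ≠ some b := by
      intro p e' hy he'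
      rcases flp_eq_some he' with ⟨hcol, _⟩ | ⟨_, hc⟩
      · exact hfreeyb p e' hy hcol
      · rcases hc with ⟨_, hcol⟩ | ⟨hk, _⟩
        · exact hfreeya p e' hy hcol
        · exact hab hk.symm
    have hF3 : ∀ (p : {p // p ∈ S}) (e' : Sym2 V), ζ p ∈ e' → σ₂ e' ≠ some b := by
      intro p e' hz he'
      rcases flp_eq_some he' with ⟨hcol, _⟩ | ⟨⟨u, hue, huR⟩, hc⟩
      · exact hζb p e' hz hcol
      · rcases hc with ⟨_, hcol⟩ | ⟨hk, _⟩
        · have hzR : ζ p ∈ R := hRclosed u huR e' hue (Or.inl hcol) (ζ p) hz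
          obtain ⟨s, ⟨q, rfl⟩, hreach⟩ := hzR
          exact hcyc q (ζ p) hreach (hζend p)
        · exact hab hk.symm
    have hF4 : ∀ (p : {p // p ∈ S}) (e' : Sym2 V), p.1.1 ∈ e' → σ₂ e' ≠ some (γ p) := by
      intro p e' hx he'
      rcases flp_eq_some he' with ⟨hcol, _⟩ | ⟨_, hc⟩
      · exact hγx p e' hx hcol
      · rcases hc with ⟨hk, _⟩ | ⟨hk, _⟩
        · exact hγb p hk
        · exact hγa p hk
    have hF5 : ∀ (p : {p // p ∈ S}) (e' : Sym2 V), ν p ∈ e' → (¬ ∃ c', Asg e' c') →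
        σ₂ e' ≠ some (γ p) := by
      intro p e' hv hna he'
      rcases flp_eq_some he' with ⟨hcol, _⟩ | ⟨_, hc⟩
      · have : e' = s(ζ p, ν p) :=
          unique_color hπ.p2 hcol (hcolzv p) hv (Sym2.mem_mk_right _ _)
        exact hna ⟨some b, ⟨p, Or.inr (Or.inl ⟨this, rfl⟩)⟩⟩
      · rcases hc with ⟨hk, _⟩ | ⟨hk, _⟩
        · exact hγb p hk
        · exact hγa p hk
    have hF6 : ∀ (p : {p // p ∈ S}) (e' : Sym2 V), ν p ∈ e' → (¬ ∃ c', Asg e' c') →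
        σ₂ e' ≠ some b := by
      intro p e' hv hna he'
      have hvR : ν p ∈ R := by
        refine ⟨p.1.1, ⟨p, rfl⟩, Reachable.symm (Adj.reachable ?_)⟩
        rw [chainGraph_adj]
        exact ⟨by rw [Sym2.eq_swap]; exact Or.inl (hcolxv p), (hνx p)⟩
      rcases flp_eq_some he' with ⟨hcol, hnc⟩ | ⟨_, hc⟩
      · exact hnc ⟨Or.inr hcol, ν p, hv, hvR⟩
      · rcases hc with ⟨_, hcol⟩ | ⟨hk, _⟩
        · have : e' = s(p.1.1, ν p) :=
            unique_color hπ.p2 hcol (hcolxv p) hv (Sym2.mem_mk_right _ _)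
          exact hna ⟨some (γ p), ⟨p, Or.inl ⟨this, rfl⟩⟩⟩
        · exact hab hk.symm
    have hfun : ∀ e oc oc', Asg e oc → Asg e oc' → oc = oc' := by
      rintro e oc oc' ⟨p, hp⟩ ⟨q, hq⟩
      by_cases hpq : p = q
      · subst hpq
        rcases hp with ⟨rfl, rfl⟩ | ⟨rfl, rfl⟩ | ⟨rfl, rfl⟩ <;>
          rcases hq with ⟨he, rfl⟩ | ⟨he, rfl⟩ | ⟨he, rfl⟩
        · rfl
        · exfalso
          rcases Sym2.eq_iff.mp he with ⟨h1, _⟩ | ⟨h1, _⟩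
          · exact hζx p h1.symm
          · exact hνx p h1.symm
        · exfalso
          rcases Sym2.eq_iff.mp he with ⟨_, h2⟩ | ⟨_, h2⟩
          · exact hνy p h2
          · exact hνx p h2
        · exfalso
          rcases Sym2.eq_iff.mp he with ⟨h1, _⟩ | ⟨h1, _⟩
          · exact hζx p h1
          · exact hζν p h1
        · rfl
        · exfalso
          rcases Sym2.eq_iff.mp he with ⟨h1, _⟩ | ⟨h1, _⟩
          · exact hζx p h1
          · exact hζy p h1
        · exfalso
          rcases Sym2.eq_iff.mp he with ⟨_, h2⟩ | ⟨h1, _⟩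
          · exact hνy p h2.symm
          · exact hνx p h1.symm
        · exfalso
          rcases Sym2.eq_iff.mp he with ⟨h1, _⟩ | ⟨h1, _⟩
          · exact hζx p h1.symm
          · exact hνx p h1.symm
        · rfl
      · exfalso
        have hva : p.1.1 ∈ e ∨ ζ p ∈ e := by
          rcases hp with ⟨rfl, _⟩ | ⟨rfl, _⟩ | ⟨rfl, _⟩
          · exact Or.inl (Sym2.mem_mk_left _ _)
          · exact Or.inr (Sym2.mem_mk_left _ _)
          · exact Or.inl (Sym2.mem_mk_left _ _)
        rcases hva with hv | hv
        · exact hfar2 p q hpq p.1.1 (Or.inl rfl) (hvertsAsg q e _ hq _ hv)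
        · exact hfar2 p q hpq (ζ p) (Or.inr (Or.inr (Or.inr rfl))) (hvertsAsg q e _ hq _ hv)
    refine assemble hσ₂p (fun e => flp_none_iff) hfun ?_ ?_ ?_ ?_ ?_
    · rintro e oc ⟨p, (⟨rfl, rfl⟩ | ⟨rfl, rfl⟩ | ⟨rfl, rfl⟩)⟩
      · exact ⟨(G.mem_edgeSet).mpr (hadjxv p), by simp⟩
      · exact ⟨(G.mem_edgeSet).mpr (hadjzv p), by simp⟩
      · exact ⟨(G.mem_edgeSet).mpr (hT p).1, by simp⟩
    · rintro e₁ e₂ oc ⟨p, hp⟩ ⟨q, hq⟩ hne ⟨v, hv1, hv2⟩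
      by_cases hpq : p = q
      · subst hpq
        rcases hp with ⟨rfl, rfl⟩ | ⟨rfl, rfl⟩ | ⟨rfl, rfl⟩ <;>
          rcases hq with ⟨rfl, hoc⟩ | ⟨rfl, hoc⟩ | ⟨rfl, hoc⟩
        · exact hne rfl
        · exact hγb p (Option.some_injective _ hoc)
        · exact hγb p (Option.some_injective _ hoc)
        · exact hγb p (Option.some_injective _ hoc).symm
        · exact hne rfl
        · -- s(ζ,ν) and s(x,y) share v : impossible
          rcases Sym2.mem_iff.mp hv1 with rfl | rfl <;> rcases Sym2.mem_iff.mp hv2 with h | h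
          · exact hζx p h
          · exact hζy p h
          · exact hνx p h
          · exact hνy p h
        · exact hγb p (Option.some_injective _ hoc).symm
        · rcases Sym2.mem_iff.mp hv2 with h | h <;> rcases Sym2.mem_iff.mp hv1 with rfl | rfl
          · exact hζx p h.symm
          · exact hζy p h.symm
          · exact hνx p h.symm
          · exact hνy p h.symm
        · exact hne rfl
      · exact hfar2 p q hpq v (hvertsAsg p e₁ _ hp _ hv1) (hvertsAsg q e₂ _ hq _ hv2)
    · rintro e oc ⟨p, (⟨rfl, rfl⟩ | ⟨rfl, rfl⟩ | ⟨rfl, rfl⟩)⟩ v hv e' hve' hna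
      · rcases Sym2.mem_iff.mp hv with rfl | rfl
        · exact hF4 p e' hve'
        · exact hF5 p e' hve' hna
      · rcases Sym2.mem_iff.mp hv with rfl | rfl
        · exact hF3 p e' hve'
        · exact hF6 p e' hve' hna
      · rcases Sym2.mem_iff.mp hv with rfl | rfl
        · exact hF1 p e' hve' hna
        · exact hF2 p e' hve'
    · rintro e oc ⟨p, (⟨rfl, rfl⟩ | ⟨rfl, rfl⟩ | ⟨rfl, rfl⟩)⟩
      · exact Or.inl (by rw [hcolxv p]; simp)
      · exact Or.inl (by rw [hcolzv p]; simp)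
      · exact Or.inr ⟨p.1, p.2, rfl⟩
    · intro p hp
      exact ⟨some b, ⟨⟨p, hp⟩, Or.inr (Or.inr ⟨rfl, rfl⟩)⟩⟩
  | t5 =>
    have hT : ∀ p : {p // p ∈ S}, G.Adj p.1.1 p.1.2 ∧ π s(p.1.1, p.1.2) = none ∧
        HasType5 G π p.1.1 p.1.2 a b :=
      fun p => ⟨(hS p.1 p.2).1, (hS p.1 p.2).2.1, (hS p.1 p.2).2.2.2⟩
    have hfreeya : ∀ p : {p // p ∈ S}, freeAt π p.1.2 a := fun p => (hT p).2.2.1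
    have hfreexb : ∀ p : {p // p ∈ S}, freeAt π p.1.1 b := fun p => (hT p).2.2.2.1
    have hcpe : ∀ p : {p // p ∈ S}, chainPathEndpoints π a b p.1.1 p.1.2 :=
      fun p => (hT p).2.2.2.2.1
    have hw : ∀ p : {p // p ∈ S}, ∃ w : Fin 8 × V × V, w.1 ≠ a ∧ freeAt π p.1.2 w.1 ∧
        w.2.1 ≠ w.2.2 ∧ w.2.1 ≠ p.1.1 ∧ w.2.1 ≠ p.1.2 ∧ w.2.2 ≠ p.1.1 ∧ w.2.2 ≠ p.1.2 ∧
        G.Adj p.1.1 w.2.2 ∧ G.Adj w.2.1 w.2.2 ∧ π s(p.1.1, w.2.2) = some w.1 ∧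
        π s(w.2.1, w.2.2) = some a ∧ freeAt π w.2.1 b ∧ freeAt π w.2.1 w.1 := by
      intro p
      obtain ⟨γ, hγ1, hγ2, z, v, h1, h2, h3, h4, h5, h6, h7, h8, h9, h10, h11⟩ :=
        (hT p).2.2.2.2.2
      exact ⟨⟨γ, z, v⟩, hγ1, hγ2, h1, h2, h3, h4, h5, h6, h7, h8, h9, h10, h11⟩
    set γ : {p // p ∈ S} → Fin 8 := fun p => (hw p).choose.1 with hγdef
    set ζ : {p // p ∈ S} → V := fun p => (hw p).choose.2.1 with hζdef
    set ν : {p // p ∈ S} → V := fun p => (hw p).choose.2.2 with hνdef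
    have hγa : ∀ p, γ p ≠ a := fun p => (hw p).choose_spec.1
    have hγy : ∀ p, freeAt π p.1.2 (γ p) := fun p => (hw p).choose_spec.2.1
    have hζν : ∀ p, ζ p ≠ ν p := fun p => (hw p).choose_spec.2.2.1
    have hζx : ∀ p, ζ p ≠ p.1.1 := fun p => (hw p).choose_spec.2.2.2.1
    have hζy : ∀ p, ζ p ≠ p.1.2 := fun p => (hw p).choose_spec.2.2.2.2.1
    have hνx : ∀ p, ν p ≠ p.1.1 := fun p => (hw p).choose_spec.2.2.2.2.2.1
    have hνy : ∀ p, ν p ≠ p.1.2 := fun p => (hw p).choose_spec.2.2.2.2.2.2.1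
    have hadjxv : ∀ p, G.Adj p.1.1 (ν p) := fun p => (hw p).choose_spec.2.2.2.2.2.2.2.1
    have hadjzv : ∀ p, G.Adj (ζ p) (ν p) := fun p => (hw p).choose_spec.2.2.2.2.2.2.2.2.1
    have hcolxv : ∀ p, π s(p.1.1, ν p) = some (γ p) :=
      fun p => (hw p).choose_spec.2.2.2.2.2.2.2.2.2.1
    have hcolzv : ∀ p, π s(ζ p, ν p) = some a :=
      fun p => (hw p).choose_spec.2.2.2.2.2.2.2.2.2.2.1
    have hζb : ∀ p, freeAt π (ζ p) b := fun p => (hw p).choose_spec.2.2.2.2.2.2.2.2.2.2.2.1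
    have hζγ : ∀ p, freeAt π (ζ p) (γ p) :=
      fun p => (hw p).choose_spec.2.2.2.2.2.2.2.2.2.2.2.2
    have hγb : ∀ p, γ p ≠ b :=
      fun p h => hfreexb p _ (Sym2.mem_mk_left _ _) (by rw [hcolxv p, h])
    have hxend : ∀ p : {p // p ∈ S}, chainEndpoint π a b p.1.1 :=
      fun p => endpoint_of_free hπ.p2 (hfreexb p)
    have hyend : ∀ p : {p // p ∈ S}, chainEndpoint π a b p.1.2 :=
      fun p => endpoint_of_free' hπ.p2 (hfreeya p)
    have hζend : ∀ p : {p // p ∈ S}, chainEndpoint π a b (ζ p) :=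
      fun p => endpoint_of_free hπ.p2 (hζb p)
    have hreachvz : ∀ p : {p // p ∈ S}, chainReach π a b (ν p) (ζ p) := by
      intro p
      refine Adj.reachable ?_
      rw [chainGraph_adj]
      exact ⟨Or.inl (by rw [Sym2.eq_swap]; exact hcolzv p), fun h => hζν p h.symm⟩
    -- distance machinery
    have hnear : ∀ (q : {p // p ∈ S}) (v : V),
        v = q.1.1 ∨ v = q.1.2 ∨ v = ν q ∨ v = ζ q →
        ∃ (u' : V) (w : G.Walk u' v), u' ∈ s(q.1.1, q.1.2) ∧ w.length ≤ 2 := by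
      rintro q v (rfl | rfl | rfl | rfl)
      · exact ⟨q.1.1, Walk.nil, Sym2.mem_mk_left _ _, by simp⟩
      · exact ⟨q.1.2, Walk.nil, Sym2.mem_mk_right _ _, by simp⟩
      · exact ⟨q.1.1, Walk.cons (hadjxv q) Walk.nil, Sym2.mem_mk_left _ _, by simp⟩
      · exact ⟨q.1.1, Walk.cons (hadjxv q) (Walk.cons (hadjzv q).symm Walk.nil),
          Sym2.mem_mk_left _ _, by simp⟩
    have hfar2 : ∀ (p q : {p // p ∈ S}), p ≠ q → ∀ v : V,
        (v = p.1.1 ∨ v = p.1.2 ∨ v = ν p ∨ v = ζ p) →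
        (v = q.1.1 ∨ v = q.1.2 ∨ v = ν q ∨ v = ζ q) → False := by
      intro p q hpq v h1 h2
      obtain ⟨u, w1, hu, hw1⟩ := hnear p v h1
      obtain ⟨u', w2, hu', hw2⟩ := hnear q v h2
      exact hfar p q hpq (edgeDist_of_common hu hu' w1 w2 hw1 hw2)
    -- flip region: the (a,b)-chains through the v's
    set T : Set V := Set.range (fun p : {p // p ∈ S} => ν p) with hTdef
    set R : Set V := {u | ∃ s ∈ T, chainReach π a b s u} with hRdef
    have hRclosed : FlipClosed a b R π := flipClosed_of_seeds T
    set σ₂ : Sym2 V → Option (Fin 8) := flp a b R π with hσ₂def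
    have hσ₂p : IsProperPEC G 8 σ₂ := flp_proper hab hπ hRclosed
    set Asg : Sym2 V → Option (Fin 8) → Prop := fun e oc => ∃ p : {p // p ∈ S},
      (e = s(p.1.1, ν p) ∧ oc = some b) ∨ (e = s(ζ p, ν p) ∧ oc = some (γ p)) ∨
      (e = s(p.1.1, p.1.2) ∧ oc = some (γ p)) with hAsgdef
    have hvertsAsg : ∀ (p : {p // p ∈ S}) (e : Sym2 V) (oc : Option (Fin 8)),
        ((e = s(p.1.1, ν p) ∧ oc = some b) ∨ (e = s(ζ p, ν p) ∧ oc = some (γ p)) ∨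
          (e = s(p.1.1, p.1.2) ∧ oc = some (γ p))) → ∀ v, v ∈ e →
        (v = p.1.1 ∨ v = p.1.2 ∨ v = ν p ∨ v = ζ p) := by
      rintro p e oc (⟨rfl, _⟩ | ⟨rfl, _⟩ | ⟨rfl, _⟩) v hv <;>
        rcases Sym2.mem_iff.mp hv with rfl | rfl <;> simp
    -- freeness facts
    have hF1 : ∀ (p : {p // p ∈ S}) (e' : Sym2 V), p.1.1 ∈ e' → σ₂ e' ≠ some b := by
      intro p e' hx he'
      rcases flp_eq_some he' with ⟨hcol, _⟩ | ⟨⟨u, hue, huR⟩, hc⟩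
      · exact hfreexb p e' hx hcol
      · rcases hc with ⟨_, hcol⟩ | ⟨hk, _⟩
        · have hxR : p.1.1 ∈ R := hRclosed u huR e' hue (Or.inl hcol) p.1.1 hx
          obtain ⟨s, ⟨q, rfl⟩, hreach⟩ := hxR
          by_cases hpq : q = p
          · subst hpq
            exact three_endpoints hπ.p2 (hxend q) (hyend q) (hζend q) (hcpe q).1
              (fun h => hζx q h.symm) (fun h => hζy q h.symm) (hcpe q).2.1
              (hreach.symm.trans (hreachvz q))
          · exact three_endpoints hπ.p2 (hxend p) (hyend p) (hζend q) (hcpe p).1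
              (fun h => hfar2 p q (fun hh => hpq hh.symm) p.1.1 (Or.inl rfl)
                (Or.inr (Or.inr (Or.inr h))))
              (fun h => hfar2 p q (fun hh => hpq hh.symm) p.1.2 (Or.inr (Or.inl rfl))
                (Or.inr (Or.inr (Or.inr h))))
              (hcpe p).2.1 (hreach.symm.trans (hreachvz q))
        · exact hab hk.symm
    have hF2 : ∀ (p : {p // p ∈ S}) (e' : Sym2 V), ν p ∈ e' → (¬ ∃ c', Asg e' c') →
        σ₂ e' ≠ some b := by
      intro p e' hv hna he'
      have hνR : ν p ∈ R := ⟨ν p, ⟨p, rfl⟩, Reachable.refl _⟩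
      rcases flp_eq_some he' with ⟨hcol, hnc⟩ | ⟨_, hc⟩
      · exact hnc ⟨Or.inr hcol, ν p, hv, hνR⟩
      · rcases hc with ⟨_, hcol⟩ | ⟨hk, _⟩
        · have : e' = s(ζ p, ν p) :=
            unique_color hπ.p2 hcol (hcolzv p) hv (Sym2.mem_mk_right _ _)
          exact hna ⟨some (γ p), ⟨p, Or.inr (Or.inl ⟨this, rfl⟩)⟩⟩
        · exact hab hk.symm
    have hF3 : ∀ (p : {p // p ∈ S}) (e' : Sym2 V), ζ p ∈ e' → σ₂ e' ≠ some (γ p) := by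
      intro p e' hz he'
      rcases flp_eq_some he' with ⟨hcol, _⟩ | ⟨_, hc⟩
      · exact hζγ p e' hz hcol
      · rcases hc with ⟨hk, _⟩ | ⟨hk, _⟩
        · exact hγb p hk
        · exact hγa p hk
    have hF4 : ∀ (p : {p // p ∈ S}) (e' : Sym2 V), ν p ∈ e' → (¬ ∃ c', Asg e' c') →
        σ₂ e' ≠ some (γ p) := by
      intro p e' hv hna he'
      rcases flp_eq_some he' with ⟨hcol, _⟩ | ⟨_, hc⟩
      · have : e' = s(p.1.1, ν p) :=
          unique_color hπ.p2 hcol (hcolxv p) hv (Sym2.mem_mk_right _ _)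
        exact hna ⟨some b, ⟨p, Or.inl ⟨this, rfl⟩⟩⟩
      · rcases hc with ⟨hk, _⟩ | ⟨hk, _⟩
        · exact hγb p hk
        · exact hγa p hk
    have hF5 : ∀ (p : {p // p ∈ S}) (e' : Sym2 V), p.1.1 ∈ e' → (¬ ∃ c', Asg e' c') →
        σ₂ e' ≠ some (γ p) := by
      intro p e' hx hna he'
      rcases flp_eq_some he' with ⟨hcol, _⟩ | ⟨_, hc⟩
      · have : e' = s(p.1.1, ν p) :=
          unique_color hπ.p2 hcol (hcolxv p) hx (Sym2.mem_mk_left _ _)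
        exact hna ⟨some b, ⟨p, Or.inl ⟨this, rfl⟩⟩⟩
      · rcases hc with ⟨hk, _⟩ | ⟨hk, _⟩
        · exact hγb p hk
        · exact hγa p hk
    have hF6 : ∀ (p : {p // p ∈ S}) (e' : Sym2 V), p.1.2 ∈ e' → σ₂ e' ≠ some (γ p) := by
      intro p e' hy he'
      rcases flp_eq_some he' with ⟨hcol, _⟩ | ⟨_, hc⟩
      · exact hγy p e' hy hcol
      · rcases hc with ⟨hk, _⟩ | ⟨hk, _⟩
        · exact hγb p hk
        · exact hγa p hk
    have hfun : ∀ e oc oc', Asg e oc → Asg e oc' → oc = oc' := by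
      rintro e oc oc' ⟨p, hp⟩ ⟨q, hq⟩
      by_cases hpq : p = q
      · subst hpq
        rcases hp with ⟨rfl, rfl⟩ | ⟨rfl, rfl⟩ | ⟨rfl, rfl⟩ <;>
          rcases hq with ⟨he, rfl⟩ | ⟨he, rfl⟩ | ⟨he, rfl⟩
        · rfl
        · exfalso
          rcases Sym2.eq_iff.mp he with ⟨h1, _⟩ | ⟨h1, _⟩
          · exact hζx p h1.symm
          · exact hνx p h1.symm
        · exfalso
          rcases Sym2.eq_iff.mp he with ⟨_, h2⟩ | ⟨_, h2⟩
          · exact hνy p h2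
          · exact hνx p h2
        · exfalso
          rcases Sym2.eq_iff.mp he with ⟨h1, _⟩ | ⟨h1, _⟩
          · exact hζx p h1
          · exact hζν p h1
        · rfl
        · exfalso
          rcases Sym2.eq_iff.mp he with ⟨h1, _⟩ | ⟨h1, _⟩
          · exact hζx p h1
          · exact hζy p h1
        · exfalso
          rcases Sym2.eq_iff.mp he with ⟨_, h2⟩ | ⟨h1, _⟩
          · exact hνy p h2.symm
          · exact hνx p h1.symm
        · exfalso
          rcases Sym2.eq_iff.mp he with ⟨h1, _⟩ | ⟨h1, _⟩
          · exact hζx p h1.symm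
          · exact hνx p h1.symm
        · rfl
      · exfalso
        have hva : p.1.1 ∈ e ∨ ζ p ∈ e := by
          rcases hp with ⟨rfl, _⟩ | ⟨rfl, _⟩ | ⟨rfl, _⟩
          · exact Or.inl (Sym2.mem_mk_left _ _)
          · exact Or.inr (Sym2.mem_mk_left _ _)
          · exact Or.inl (Sym2.mem_mk_left _ _)
        rcases hva with hv | hv
        · exact hfar2 p q hpq p.1.1 (Or.inl rfl) (hvertsAsg q e _ hq _ hv)
        · exact hfar2 p q hpq (ζ p) (Or.inr (Or.inr (Or.inr rfl))) (hvertsAsg q e _ hq _ hv)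
    refine assemble hσ₂p (fun e => flp_none_iff) hfun ?_ ?_ ?_ ?_ ?_
    · rintro e oc ⟨p, (⟨rfl, rfl⟩ | ⟨rfl, rfl⟩ | ⟨rfl, rfl⟩)⟩
      · exact ⟨(G.mem_edgeSet).mpr (hadjxv p), by simp⟩
      · exact ⟨(G.mem_edgeSet).mpr (hadjzv p), by simp⟩
      · exact ⟨(G.mem_edgeSet).mpr (hT p).1, by simp⟩
    · rintro e₁ e₂ oc ⟨p, hp⟩ ⟨q, hq⟩ hne ⟨v, hv1, hv2⟩
      by_cases hpq : p = q
      · subst hpq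
        rcases hp with ⟨rfl, rfl⟩ | ⟨rfl, rfl⟩ | ⟨rfl, rfl⟩ <;>
          rcases hq with ⟨rfl, hoc⟩ | ⟨rfl, hoc⟩ | ⟨rfl, hoc⟩
        · exact hne rfl
        · exact hγb p (Option.some_injective _ hoc).symm
        · exact hγb p (Option.some_injective _ hoc).symm
        · exact hγb p (Option.some_injective _ hoc)
        · exact hne rfl
        · -- s(ζ,ν) and s(x,y) share v : impossible
          rcases Sym2.mem_iff.mp hv1 with rfl | rfl <;> rcases Sym2.mem_iff.mp hv2 with h | h
          · exact hζx p h
          · exact hζy p h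
          · exact hνx p h
          · exact hνy p h
        · exact hγb p (Option.some_injective _ hoc)
        · rcases Sym2.mem_iff.mp hv2 with h | h <;> rcases Sym2.mem_iff.mp hv1 with rfl | rfl
          · exact hζx p h.symm
          · exact hζy p h.symm
          · exact hνx p h.symm
          · exact hνy p h.symm
        · exact hne rfl
      · exact hfar2 p q hpq v (hvertsAsg p e₁ _ hp _ hv1) (hvertsAsg q e₂ _ hq _ hv2)
    · rintro e oc ⟨p, (⟨rfl, rfl⟩ | ⟨rfl, rfl⟩ | ⟨rfl, rfl⟩)⟩ v hv e' hve' hna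
      · rcases Sym2.mem_iff.mp hv with rfl | rfl
        · exact hF1 p e' hve'
        · exact hF2 p e' hve' hna
      · rcases Sym2.mem_iff.mp hv with rfl | rfl
        · exact hF3 p e' hve'
        · exact hF4 p e' hve' hna
      · rcases Sym2.mem_iff.mp hv with rfl | rfl
        · exact hF5 p e' hve' hna
        · exact hF6 p e' hve'
    · rintro e oc ⟨p, (⟨rfl, rfl⟩ | ⟨rfl, rfl⟩ | ⟨rfl, rfl⟩)⟩
      · exact Or.inl (by rw [hcolxv p]; simp)
      · exact Or.inl (by rw [hcolzv p]; simp)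
      · exact Or.inr ⟨p.1, p.2, rfl⟩
    · intro p hp
      exact ⟨some (γ ⟨p, hp⟩), ⟨⟨p, hp⟩, Or.inr (Or.inr ⟨rfl, rfl⟩)⟩⟩
  | t6 =>
    have hT : ∀ p : {p // p ∈ S}, G.Adj p.1.1 p.1.2 ∧ π s(p.1.1, p.1.2) = none ∧
        HasType6 G π p.1.1 p.1.2 a b c d :=
      fun p => ⟨(hS p.1 p.2).1, (hS p.1 p.2).2.1, (hS p.1 p.2).2.2.2⟩
    have hfreeya : ∀ p : {p // p ∈ S}, freeAt π p.1.2 a := fun p => (hT p).2.2.1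
    have hfreexb : ∀ p : {p // p ∈ S}, freeAt π p.1.1 b := fun p => (hT p).2.2.2.2.2.1
    have hcpe : ∀ p : {p // p ∈ S}, chainPathEndpoints π a b p.1.1 p.1.2 :=
      fun p => (hT p).2.2.2.2.2.2.1
    have hw : ∀ p : {p // p ∈ S}, ∃ w : V × V × V,
        w.1 ≠ w.2.1 ∧ w.1 ≠ w.2.2 ∧ w.2.1 ≠ w.2.2 ∧ w.1 ≠ p.1.1 ∧ w.1 ≠ p.1.2 ∧
        w.2.1 ≠ p.1.1 ∧ w.2.1 ≠ p.1.2 ∧ w.2.2 ≠ p.1.1 ∧ w.2.2 ≠ p.1.2 ∧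
        G.Adj p.1.1 w.2.1 ∧ G.Adj p.1.1 w.2.2 ∧ G.Adj w.1 w.2.1 ∧ G.Adj w.1 w.2.2 ∧
        π s(p.1.1, w.2.1) = some c ∧ π s(p.1.1, w.2.2) = some a ∧
        π s(w.1, w.2.1) = some a ∧ π s(w.1, w.2.2) = some c ∧
        freeAt π w.1 b ∧ freeAt π w.1 d := by
      intro p
      obtain ⟨z, v₁, v₂, h1, h2, h3, h4, h5, h6, h7, h8, h9, h10, h11, h12, h13, h14, h15,
        h16, h17, h18, h19⟩ := (hT p).2.2.2.2.2.2.2.2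
      exact ⟨⟨z, v₁, v₂⟩, h1, h2, h3, h4, h5, h6, h7, h8, h9, h10, h11, h12, h13, h14, h15,
        h16, h17, h18, h19⟩
    set ζ : {p // p ∈ S} → V := fun p => (hw p).choose.1 with hζdef
    set ν₁ : {p // p ∈ S} → V := fun p => (hw p).choose.2.1 with hν₁def
    set ν₂ : {p // p ∈ S} → V := fun p => (hw p).choose.2.2 with hν₂def
    have hζν₁ : ∀ p, ζ p ≠ ν₁ p := fun p => (hw p).choose_spec.1
    have hζν₂ : ∀ p, ζ p ≠ ν₂ p := fun p => (hw p).choose_spec.2.1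
    have hν₁ν₂ : ∀ p, ν₁ p ≠ ν₂ p := fun p => (hw p).choose_spec.2.2.1
    have hζx : ∀ p, ζ p ≠ p.1.1 := fun p => (hw p).choose_spec.2.2.2.1
    have hζy : ∀ p, ζ p ≠ p.1.2 := fun p => (hw p).choose_spec.2.2.2.2.1
    have hν₁x : ∀ p, ν₁ p ≠ p.1.1 := fun p => (hw p).choose_spec.2.2.2.2.2.1
    have hν₁y : ∀ p, ν₁ p ≠ p.1.2 := fun p => (hw p).choose_spec.2.2.2.2.2.2.1
    have hν₂x : ∀ p, ν₂ p ≠ p.1.1 := fun p => (hw p).choose_spec.2.2.2.2.2.2.2.1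
    have hν₂y : ∀ p, ν₂ p ≠ p.1.2 := fun p => (hw p).choose_spec.2.2.2.2.2.2.2.2.1
    have hadjxv₁ : ∀ p, G.Adj p.1.1 (ν₁ p) := fun p => (hw p).choose_spec.2.2.2.2.2.2.2.2.2.1
    have hadjxv₂ : ∀ p, G.Adj p.1.1 (ν₂ p) :=
      fun p => (hw p).choose_spec.2.2.2.2.2.2.2.2.2.2.1
    have hadjzv₁ : ∀ p, G.Adj (ζ p) (ν₁ p) :=
      fun p => (hw p).choose_spec.2.2.2.2.2.2.2.2.2.2.2.1
    have hadjzv₂ : ∀ p, G.Adj (ζ p) (ν₂ p) :=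
      fun p => (hw p).choose_spec.2.2.2.2.2.2.2.2.2.2.2.2.1
    have hcolxv₁ : ∀ p, π s(p.1.1, ν₁ p) = some c :=
      fun p => (hw p).choose_spec.2.2.2.2.2.2.2.2.2.2.2.2.2.1
    have hcolxv₂ : ∀ p, π s(p.1.1, ν₂ p) = some a :=
      fun p => (hw p).choose_spec.2.2.2.2.2.2.2.2.2.2.2.2.2.2.1
    have hcolzv₁ : ∀ p, π s(ζ p, ν₁ p) = some a :=
      fun p => (hw p).choose_spec.2.2.2.2.2.2.2.2.2.2.2.2.2.2.2.1
    have hcolzv₂ : ∀ p, π s(ζ p, ν₂ p) = some c :=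
      fun p => (hw p).choose_spec.2.2.2.2.2.2.2.2.2.2.2.2.2.2.2.2.1
    have hζb : ∀ p, freeAt π (ζ p) b :=
      fun p => (hw p).choose_spec.2.2.2.2.2.2.2.2.2.2.2.2.2.2.2.2.2.1
    have hxend : ∀ p : {p // p ∈ S}, chainEndpoint π a b p.1.1 :=
      fun p => endpoint_of_free hπ.p2 (hfreexb p)
    have hyend : ∀ p : {p // p ∈ S}, chainEndpoint π a b p.1.2 :=
      fun p => endpoint_of_free' hπ.p2 (hfreeya p)
    have hζend : ∀ p : {p // p ∈ S}, chainEndpoint π a b (ζ p) :=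
      fun p => endpoint_of_free hπ.p2 (hζb p)
    -- distance machinery
    have hnear : ∀ (q : {p // p ∈ S}) (v : V),
        v = q.1.1 ∨ v = q.1.2 ∨ v = ν₁ q ∨ v = ν₂ q ∨ v = ζ q →
        ∃ (u' : V) (w : G.Walk u' v), u' ∈ s(q.1.1, q.1.2) ∧ w.length ≤ 2 := by
      rintro q v (rfl | rfl | rfl | rfl | rfl)
      · exact ⟨q.1.1, Walk.nil, Sym2.mem_mk_left _ _, by simp⟩
      · exact ⟨q.1.2, Walk.nil, Sym2.mem_mk_right _ _, by simp⟩
      · exact ⟨q.1.1, Walk.cons (hadjxv₁ q) Walk.nil, Sym2.mem_mk_left _ _, by simp⟩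
      · exact ⟨q.1.1, Walk.cons (hadjxv₂ q) Walk.nil, Sym2.mem_mk_left _ _, by simp⟩
      · exact ⟨q.1.1, Walk.cons (hadjxv₁ q) (Walk.cons (hadjzv₁ q).symm Walk.nil),
          Sym2.mem_mk_left _ _, by simp⟩
    have hfar2 : ∀ (p q : {p // p ∈ S}), p ≠ q → ∀ v : V,
        (v = p.1.1 ∨ v = p.1.2 ∨ v = ν₁ p ∨ v = ν₂ p ∨ v = ζ p) →
        (v = q.1.1 ∨ v = q.1.2 ∨ v = ν₁ q ∨ v = ν₂ q ∨ v = ζ q) → False := by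
      intro p q hpq v h1 h2
      obtain ⟨u, w1, hu, hw1⟩ := hnear p v h1
      obtain ⟨u', w2, hu', hw2⟩ := hnear q v h2
      exact hfar p q hpq (edgeDist_of_common hu hu' w1 w2 hw1 hw2)
    -- the preliminary local swap on the 4-cycles x v₁ z v₂
    set Asg₁ : Sym2 V → Option (Fin 8) → Prop := fun e oc => ∃ p : {p // p ∈ S},
      (e = s(p.1.1, ν₁ p) ∧ oc = some a) ∨ (e = s(p.1.1, ν₂ p) ∧ oc = some c) ∨
      (e = s(ζ p, ν₁ p) ∧ oc = some c) ∨ (e = s(ζ p, ν₂ p) ∧ oc = some a) with hAsg₁def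
    have hvertsAsg₁ : ∀ (p : {p // p ∈ S}) (e : Sym2 V) (oc : Option (Fin 8)),
        ((e = s(p.1.1, ν₁ p) ∧ oc = some a) ∨ (e = s(p.1.1, ν₂ p) ∧ oc = some c) ∨
          (e = s(ζ p, ν₁ p) ∧ oc = some c) ∨ (e = s(ζ p, ν₂ p) ∧ oc = some a)) →
        ∀ v, v ∈ e →
        (v = p.1.1 ∨ v = p.1.2 ∨ v = ν₁ p ∨ v = ν₂ p ∨ v = ζ p) := by
      rintro p e oc (⟨rfl, _⟩ | ⟨rfl, _⟩ | ⟨rfl, _⟩ | ⟨rfl, _⟩) v hv <;>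
        rcases Sym2.mem_iff.mp hv with rfl | rfl <;> simp
    -- the four swap edges of a site are pairwise distinct
    have hne12 : ∀ p : {p // p ∈ S}, s(p.1.1, ν₁ p) ≠ s(p.1.1, ν₂ p) := by
      intro p h
      rcases Sym2.eq_iff.mp h with ⟨_, h2⟩ | ⟨h1, _⟩
      · exact hν₁ν₂ p h2
      · exact hν₂x p h1.symm
    have hne13 : ∀ p : {p // p ∈ S}, s(p.1.1, ν₁ p) ≠ s(ζ p, ν₁ p) := by
      intro p h
      rcases Sym2.eq_iff.mp h with ⟨h1, _⟩ | ⟨h1, _⟩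
      · exact hζx p h1.symm
      · exact hν₁x p h1.symm
    have hne14 : ∀ p : {p // p ∈ S}, s(p.1.1, ν₁ p) ≠ s(ζ p, ν₂ p) := by
      intro p h
      rcases Sym2.eq_iff.mp h with ⟨h1, _⟩ | ⟨h1, _⟩
      · exact hζx p h1.symm
      · exact hν₂x p h1.symm
    have hne23 : ∀ p : {p // p ∈ S}, s(p.1.1, ν₂ p) ≠ s(ζ p, ν₁ p) := by
      intro p h
      rcases Sym2.eq_iff.mp h with ⟨h1, _⟩ | ⟨h1, _⟩
      · exact hζx p h1.symm
      · exact hν₁x p h1.symm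
    have hne24 : ∀ p : {p // p ∈ S}, s(p.1.1, ν₂ p) ≠ s(ζ p, ν₂ p) := by
      intro p h
      rcases Sym2.eq_iff.mp h with ⟨h1, _⟩ | ⟨h1, _⟩
      · exact hζx p h1.symm
      · exact hν₂x p h1.symm
    have hne34 : ∀ p : {p // p ∈ S}, s(ζ p, ν₁ p) ≠ s(ζ p, ν₂ p) := by
      intro p h
      rcases Sym2.eq_iff.mp h with ⟨_, h2⟩ | ⟨h1, _⟩
      · exact hν₁ν₂ p h2
      · exact hζν₂ p h1
    have hfun₁ : ∀ e oc oc', Asg₁ e oc → Asg₁ e oc' → oc = oc' := by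
      rintro e oc oc' ⟨p, hp⟩ ⟨q, hq⟩
      by_cases hpq : p = q
      · subst hpq
        rcases hp with ⟨rfl, rfl⟩ | ⟨rfl, rfl⟩ | ⟨rfl, rfl⟩ | ⟨rfl, rfl⟩ <;>
          rcases hq with ⟨he, rfl⟩ | ⟨he, rfl⟩ | ⟨he, rfl⟩ | ⟨he, rfl⟩
        · rfl
        · exact absurd he (hne12 p)
        · exact absurd he (hne13 p)
        · exact absurd he (hne14 p)
        · exact absurd he.symm (hne12 p)
        · rfl
        · exact absurd he (hne23 p)
        · exact absurd he (hne24 p)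
        · exact absurd he.symm (hne13 p)
        · exact absurd he.symm (hne23 p)
        · rfl
        · exact absurd he (hne34 p)
        · exact absurd he.symm (hne14 p)
        · exact absurd he.symm (hne24 p)
        · exact absurd he.symm (hne34 p)
        · rfl
      · exfalso
        have hva : p.1.1 ∈ e ∨ ζ p ∈ e := by
          rcases hp with ⟨rfl, _⟩ | ⟨rfl, _⟩ | ⟨rfl, _⟩ | ⟨rfl, _⟩
          · exact Or.inl (Sym2.mem_mk_left _ _)
          · exact Or.inl (Sym2.mem_mk_left _ _)
          · exact Or.inr (Sym2.mem_mk_left _ _)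
          · exact Or.inr (Sym2.mem_mk_left _ _)
        rcases hva with hv | hv
        · exact hfar2 p q hpq p.1.1 (Or.inl rfl) (hvertsAsg₁ q e _ hq _ hv)
        · exact hfar2 p q hpq (ζ p) (Or.inr (Or.inr (Or.inr (Or.inr rfl))))
            (hvertsAsg₁ q e _ hq _ hv)
    set σ₁ : Sym2 V → Option (Fin 8) := ovr π Asg₁ with hσ₁def
    have hσ₁p : IsProperPEC G 8 σ₁ := by
      refine ovr_proper hπ hfun₁ ?_ ?_ ?_
      · rintro e oc ⟨p, (⟨rfl, rfl⟩ | ⟨rfl, rfl⟩ | ⟨rfl, rfl⟩ | ⟨rfl, rfl⟩)⟩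
        · exact ⟨(G.mem_edgeSet).mpr (hadjxv₁ p), by simp⟩
        · exact ⟨(G.mem_edgeSet).mpr (hadjxv₂ p), by simp⟩
        · exact ⟨(G.mem_edgeSet).mpr (hadjzv₁ p), by simp⟩
        · exact ⟨(G.mem_edgeSet).mpr (hadjzv₂ p), by simp⟩
      · rintro e₁ e₂ oc ⟨p, hp⟩ ⟨q, hq⟩ hne ⟨v, hv1, hv2⟩
        by_cases hpq : p = q
        · subst hpq
          rcases hp with ⟨rfl, rfl⟩ | ⟨rfl, rfl⟩ | ⟨rfl, rfl⟩ | ⟨rfl, rfl⟩ <;>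
            rcases hq with ⟨rfl, hoc⟩ | ⟨rfl, hoc⟩ | ⟨rfl, hoc⟩ | ⟨rfl, hoc⟩
          · exact hne rfl
          · exact hac (Option.some_injective _ hoc)
          · exact hac (Option.some_injective _ hoc)
          · rcases Sym2.mem_iff.mp hv1 with rfl | rfl <;>
              rcases Sym2.mem_iff.mp hv2 with h | h
            · exact hζx p h.symm
            · exact hν₂x p h.symm
            · exact hζν₁ p h.symm
            · exact hν₁ν₂ p h
          · exact hac (Option.some_injective _ hoc).symm
          · exact hne rfl
          · rcases Sym2.mem_iff.mp hv1 with rfl | rfl <;>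
              rcases Sym2.mem_iff.mp hv2 with h | h
            · exact hζx p h.symm
            · exact hν₁x p h.symm
            · exact hζν₂ p h.symm
            · exact hν₁ν₂ p h.symm
          · exact hac (Option.some_injective _ hoc).symm
          · exact hac (Option.some_injective _ hoc).symm
          · rcases Sym2.mem_iff.mp hv1 with rfl | rfl <;>
              rcases Sym2.mem_iff.mp hv2 with h | h
            · exact hζx p h
            · exact hζν₂ p h
            · exact hν₁x p h
            · exact hν₁ν₂ p h
          · exact hne rfl
          · exact hac (Option.some_injective _ hoc).symm
          · rcases Sym2.mem_iff.mp hv1 with rfl | rfl <;>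
              rcases Sym2.mem_iff.mp hv2 with h | h
            · exact hζx p h
            · exact hζν₁ p h
            · exact hν₂x p h
            · exact hν₁ν₂ p h.symm
          · exact hac (Option.some_injective _ hoc)
          · exact hac (Option.some_injective _ hoc)
          · exact hne rfl
        · exact hfar2 p q hpq v (hvertsAsg₁ p e₁ _ hp _ hv1) (hvertsAsg₁ q e₂ _ hq _ hv2)
      · rintro e oc ⟨p, (⟨rfl, rfl⟩ | ⟨rfl, rfl⟩ | ⟨rfl, rfl⟩ | ⟨rfl, rfl⟩)⟩ v hv e' hve' hna
          <;> rcases Sym2.mem_iff.mp hv with rfl | rfl <;> intro hcol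
        · exact hna ⟨some c, ⟨p, Or.inr (Or.inl ⟨unique_color hπ.p2 hcol (hcolxv₂ p) hve'
            (Sym2.mem_mk_left _ _), rfl⟩)⟩⟩
        · exact hna ⟨some c, ⟨p, Or.inr (Or.inr (Or.inl ⟨unique_color hπ.p2 hcol
            (hcolzv₁ p) hve' (Sym2.mem_mk_right _ _), rfl⟩))⟩⟩
        · exact hna ⟨some a, ⟨p, Or.inl ⟨unique_color hπ.p2 hcol (hcolxv₁ p) hve'
            (Sym2.mem_mk_left _ _), rfl⟩⟩⟩
        · exact hna ⟨some a, ⟨p, Or.inr (Or.inr (Or.inr ⟨unique_color hπ.p2 hcol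
            (hcolzv₂ p) hve' (Sym2.mem_mk_right _ _), rfl⟩))⟩⟩
        · exact hna ⟨some a, ⟨p, Or.inr (Or.inr (Or.inr ⟨unique_color hπ.p2 hcol
            (hcolzv₂ p) hve' (Sym2.mem_mk_left _ _), rfl⟩))⟩⟩
        · exact hna ⟨some a, ⟨p, Or.inl ⟨unique_color hπ.p2 hcol (hcolxv₁ p) hve'
            (Sym2.mem_mk_right _ _), rfl⟩⟩⟩
        · exact hna ⟨some c, ⟨p, Or.inr (Or.inr (Or.inl ⟨unique_color hπ.p2 hcol
            (hcolzv₁ p) hve' (Sym2.mem_mk_left _ _), rfl⟩))⟩⟩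
        · exact hna ⟨some c, ⟨p, Or.inr (Or.inl ⟨unique_color hπ.p2 hcol (hcolxv₂ p) hve'
            (Sym2.mem_mk_right _ _), rfl⟩)⟩⟩
    have hσ₁xv₁ : ∀ p, σ₁ s(p.1.1, ν₁ p) = some a :=
      fun p => ovr_eq_of hfun₁ ⟨p, Or.inl ⟨rfl, rfl⟩⟩
    have hσ₁xv₂ : ∀ p, σ₁ s(p.1.1, ν₂ p) = some c :=
      fun p => ovr_eq_of hfun₁ ⟨p, Or.inr (Or.inl ⟨rfl, rfl⟩)⟩
    have hσ₁zv₁ : ∀ p, σ₁ s(ζ p, ν₁ p) = some c :=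
      fun p => ovr_eq_of hfun₁ ⟨p, Or.inr (Or.inr (Or.inl ⟨rfl, rfl⟩))⟩
    have hσ₁zv₂ : ∀ p, σ₁ s(ζ p, ν₂ p) = some a :=
      fun p => ovr_eq_of hfun₁ ⟨p, Or.inr (Or.inr (Or.inr ⟨rfl, rfl⟩))⟩
    have hσ₁none : ∀ e, σ₁ e = none ↔ π e = none := by
      intro e
      by_cases h : ∃ oc, Asg₁ e oc
      · obtain ⟨oc, hoc⟩ := h
        rw [hσ₁def, ovr_eq_of hfun₁ hoc]
        obtain ⟨p, hforms⟩ := hoc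
        rcases hforms with ⟨rfl, rfl⟩ | ⟨rfl, rfl⟩ | ⟨rfl, rfl⟩ | ⟨rfl, rfl⟩ <;>
          simp [hcolxv₁ p, hcolxv₂ p, hcolzv₁ p, hcolzv₂ p]
      · rw [hσ₁def, ovr_eq_base h]
    -- the common chain graph of π and σ₁
    set HH : SimpleGraph V := chainGraph π a b ⊓ chainGraph σ₁ a b with hHHdef
    have hHHle : HH ≤ chainGraph π a b := inf_le_left
    -- x has no HH-edges
    have hHHx : ∀ (r : {p // p ∈ S}) (w : V), ¬ HH.Adj r.1.1 w := by
      intro r w hadj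
      rw [hHHdef, SimpleGraph.inf_adj, chainGraph_adj, chainGraph_adj] at hadj
      obtain ⟨⟨hπc, hne⟩, hσc, _⟩ := hadj
      rcases hπc with hπc | hπc
      · have : s(r.1.1, w) = s(r.1.1, ν₂ r) :=
          unique_color hπ.p2 hπc (hcolxv₂ r) (Sym2.mem_mk_left _ _) (Sym2.mem_mk_left _ _)
        rw [this, hσ₁xv₂ r] at hσc
        rcases hσc with h | h
        · exact hac (Option.some_injective _ h).symm
        · exact hbc (Option.some_injective _ h).symm
      · exact hfreexb r _ (Sym2.mem_mk_left _ _) hπc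
    -- ζ has no unassigned π-chain edges, and no HH-edges
    have hHHz : ∀ (r : {p // p ∈ S}) (w : V), ¬ HH.Adj (ζ r) w := by
      intro r w hadj
      rw [hHHdef, SimpleGraph.inf_adj, chainGraph_adj, chainGraph_adj] at hadj
      obtain ⟨⟨hπc, hne⟩, hσc, _⟩ := hadj
      rcases hπc with hπc | hπc
      · have : s(ζ r, w) = s(ζ r, ν₁ r) :=
          unique_color hπ.p2 hπc (hcolzv₁ r) (Sym2.mem_mk_left _ _) (Sym2.mem_mk_left _ _)
        rw [this, hσ₁zv₁ r] at hσc
        rcases hσc with h | h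
        · exact hac (Option.some_injective _ h).symm
        · exact hbc (Option.some_injective _ h).symm
      · exact hζb r _ (Sym2.mem_mk_left _ _) hπc
    -- the absorbing set around site p
    set A : {p // p ∈ S} → Set V := fun p =>
      {u | HH.Reachable p.1.2 u ∨ HH.Reachable (ν₂ p) u ∨ u = ζ p} with hAdef
    have hmemπ : ∀ (p : {p // p ∈ S}) (u : V), u ∈ A p → u ≠ ζ p →
        chainReach π a b p.1.1 u := by
      rintro p u (hu | hu | hu) hne
      · exact (hcpe p).2.1.trans (hu.mono hHHle)
      · refine Reachable.trans ?_ (hu.mono hHHle)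
        refine Adj.reachable ?_
        rw [chainGraph_adj]
        exact ⟨Or.inl (hcolxv₂ p), fun h => hν₂x p h.symm⟩
      · exact absurd hu hne
    -- x_r is never in A p
    have hxnotA : ∀ (p r : {p // p ∈ S}), r.1.1 ∉ A p := by
      rintro p r (hu | hu | hu)
      · have := reachable_eq_of_isolated (hHHx r) hu.symm
        by_cases hrp : r = p
        · subst hrp; exact (hcpe r).1 this
        · exact hfar2 r p hrp r.1.1 (Or.inl rfl) (Or.inr (Or.inl this))
      · have := reachable_eq_of_isolated (hHHx r) hu.symm
        by_cases hrp : r = p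
        · subst hrp; exact hν₂x r this.symm
        · exact hfar2 r p hrp r.1.1 (Or.inl rfl) (Or.inr (Or.inr (Or.inr (Or.inl this))))
      · by_cases hrp : r = p
        · subst hrp; exact hζx r hu.symm
        · exact hfar2 r p hrp r.1.1 (Or.inl rfl) (Or.inr (Or.inr (Or.inr (Or.inr hu))))
    -- a π-endpoint in the chain of x_p distinct from x_p, y_p is impossible
    have hthird : ∀ (p : {p // p ∈ S}) (u : V), chainEndpoint π a b u →
        chainReach π a b p.1.1 u → u ≠ p.1.1 → u ≠ p.1.2 → False := by
      intro p u huend hreach hux huy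
      exact three_endpoints hπ.p2 (hxend p) (hyend p) huend (hcpe p).1
        (fun h => hux h.symm) (fun h => huy h.symm) (hcpe p).2.1 hreach
    -- ζ_r in the π-chain of x_p is impossible
    have hζchain : ∀ (p r : {p // p ∈ S}), chainReach π a b p.1.1 (ζ r) → False := by
      intro p r hreach
      by_cases hrp : r = p
      · subst hrp
        exact hthird r (ζ r) (hζend r) hreach (hζx r) (hζy r)
      · refine hthird p (ζ r) (hζend r) hreach ?_ ?_ <;> intro h <;>
          exact hfar2 r p hrp (ζ r) (Or.inr (Or.inr (Or.inr (Or.inr rfl)))) (by rw [h]; simp)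
    -- ν₁_r in the π-chain of x_p is impossible (drags in ζ_r)
    have hν₁chain : ∀ (p r : {p // p ∈ S}), chainReach π a b p.1.1 (ν₁ r) → False := by
      intro p r hreach
      refine hζchain p r (hreach.trans (Adj.reachable ?_))
      rw [chainGraph_adj]
      refine ⟨Or.inl ?_, fun h => hζν₁ r h.symm⟩
      rw [Sym2.eq_swap]
      exact hcolzv₁ r
    -- ν₂_r (r ≠ p) in the π-chain of x_p is impossible (drags in x_r)
    have hν₂chain : ∀ (p r : {p // p ∈ S}), r ≠ p → chainReach π a b p.1.1 (ν₂ r) → False := by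
      intro p r hrp hreach
      have hxr : chainReach π a b p.1.1 r.1.1 := by
        refine hreach.trans (Adj.reachable ?_)
        rw [chainGraph_adj]
        refine ⟨Or.inl ?_, hν₂x r⟩
        rw [Sym2.eq_swap]
        exact hcolxv₂ r
      refine hthird p r.1.1 (hxend r) hxr ?_ ?_ <;> intro h <;>
        exact hfar2 r p hrp r.1.1 (Or.inl rfl) (by rw [h]; simp)
    -- A p is closed under σ₁-chain adjacency
    have hAclosed : ∀ p : {p // p ∈ S}, ∀ u ∈ A p, ∀ w, (chainGraph σ₁ a b).Adj u w →
        w ∈ A p := by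
      intro p u hu w hadj
      have hadj' := hadj
      rw [chainGraph_adj] at hadj'
      obtain ⟨hσc, hne⟩ := hadj'
      by_cases hasg : ∃ oc, Asg₁ s(u, w) oc
      · obtain ⟨oc, hoc⟩ := hasg
        have hval : σ₁ s(u, w) = oc := ovr_eq_of hfun₁ hoc
        obtain ⟨r, hforms⟩ := hoc
        rcases hforms with ⟨he, rfl⟩ | ⟨he, rfl⟩ | ⟨he, rfl⟩ | ⟨he, rfl⟩
        · -- swap edge x_r ν₁_r, colored a
          rcases Sym2.eq_iff.mp he with ⟨h1, h2⟩ | ⟨h1, h2⟩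
          · exact absurd hu (by rw [h1]; exact hxnotA p r)
          · -- u = ν₁ r ∈ A p : impossible
            exfalso
            rw [h1] at hu
            rcases hu with hm | hm | hm
            · exact hν₁chain p r ((hcpe p).2.1.trans (hm.mono hHHle))
            · refine hν₁chain p r (Reachable.trans ?_ (hm.mono hHHle))
              exact Adj.reachable (by
                rw [chainGraph_adj]
                exact ⟨Or.inl (hcolxv₂ p), fun h => hν₂x p h.symm⟩)
            · by_cases hrp : r = p
              · subst hrp; exact hζν₁ r hm.symm
              · exact hfar2 r p hrp (ν₁ r) (Or.inr (Or.inr (Or.inl rfl)))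
                  (Or.inr (Or.inr (Or.inr (Or.inr hm))))
        · -- swap edge x_r ν₂_r, colored c : not an (a,b)-edge
          exfalso
          rw [hval] at hσc
          rcases hσc with h | h
          · exact hac (Option.some_injective _ h).symm
          · exact hbc (Option.some_injective _ h).symm
        · -- swap edge ζ_r ν₁_r, colored c : not an (a,b)-edge
          exfalso
          rw [hval] at hσc
          rcases hσc with h | h
          · exact hac (Option.some_injective _ h).symm
          · exact hbc (Option.some_injective _ h).symm
        · -- swap edge ζ_r ν₂_r, colored a
          rcases Sym2.eq_iff.mp he with ⟨h1, h2⟩ | ⟨h1, h2⟩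
          · -- u = ζ r, w = ν₂ r
            by_cases hrp : r = p
            · subst hrp
              exact Or.inr (Or.inl (by rw [h2]))
            · exfalso
              rw [h1] at hu
              rcases hu with hm | hm | hm
              · exact hζchain p r ((hcpe p).2.1.trans (hm.mono hHHle))
              · refine hζchain p r (Reachable.trans ?_ (hm.mono hHHle))
                exact Adj.reachable (by
                  rw [chainGraph_adj]
                  exact ⟨Or.inl (hcolxv₂ p), fun h => hν₂x p h.symm⟩)
              · exact hfar2 r p hrp (ζ r) (Or.inr (Or.inr (Or.inr (Or.inr rfl))))
                  (Or.inr (Or.inr (Or.inr (Or.inr hm))))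
          · -- u = ν₂ r, w = ζ r
            by_cases hrp : r = p
            · subst hrp
              exact Or.inr (Or.inr h2)
            · exfalso
              rw [h1] at hu
              rcases hu with hm | hm | hm
              · exact hν₂chain p r hrp ((hcpe p).2.1.trans (hm.mono hHHle))
              · refine hν₂chain p r hrp (Reachable.trans ?_ (hm.mono hHHle))
                exact Adj.reachable (by
                  rw [chainGraph_adj]
                  exact ⟨Or.inl (hcolxv₂ p), fun h => hν₂x p h.symm⟩)
              · exact hfar2 r p hrp (ν₂ r) (Or.inr (Or.inr (Or.inr (Or.inl rfl))))
                  (Or.inr (Or.inr (Or.inr (Or.inr hm))))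
      · -- an old edge: both a π- and σ₁-chain edge
        have hπval : σ₁ s(u, w) = π s(u, w) := ovr_eq_base hasg
        have hHHadj : HH.Adj u w := by
          rw [hHHdef, SimpleGraph.inf_adj, chainGraph_adj, chainGraph_adj]
          exact ⟨⟨hπval ▸ hσc, hne⟩, hσc, hne⟩
        rcases hu with hm | hm | hm
        · exact Or.inl (hm.trans hHHadj.reachable)
        · exact Or.inr (Or.inl (hm.trans hHHadj.reachable))
        · rw [hm] at hHHadj
          exact absurd hHHadj (hHHz p w)
    -- y_p is never σ₁-reachable from any x_r
    have hnoreach : ∀ (r p : {p // p ∈ S}), ¬ chainReach σ₁ a b r.1.1 p.1.2 := by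
      intro r p h
      exact hxnotA p r (reach_mem_closed (hAclosed p) (Or.inl (Reachable.refl _)) h.symm)
    -- flip region: the σ₁-(a,b)-chains through the x's
    set T : Set V := Set.range (fun p : {p // p ∈ S} => p.1.1) with hTdef
    set R : Set V := {u | ∃ s ∈ T, chainReach σ₁ a b s u} with hRdef
    have hRclosed : FlipClosed a b R σ₁ := flipClosed_of_seeds T
    set σ₂ : Sym2 V → Option (Fin 8) := flp a b R σ₁ with hσ₂def
    have hσ₂p : IsProperPEC G 8 σ₂ := flp_proper hab hσ₁p hRclosed
    have hnone : ∀ e, σ₂ e = none ↔ π e = none := fun e => flp_none_iff.trans (hσ₁none e)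
    -- no edge at y_p is a swap edge
    have hynotasg : ∀ (p : {p // p ∈ S}) (e' : Sym2 V), p.1.2 ∈ e' →
        (∃ oc, Asg₁ e' oc) → False := by
      rintro p e' hy ⟨oc, r, hforms⟩
      have hy4 : p.1.2 = r.1.1 ∨ p.1.2 = ν₁ r ∨ p.1.2 = ν₂ r ∨ p.1.2 = ζ r := by
        rcases hforms with ⟨rfl, _⟩ | ⟨rfl, _⟩ | ⟨rfl, _⟩ | ⟨rfl, _⟩ <;>
          rcases Sym2.mem_iff.mp hy with h | h <;> simp [h]
      by_cases hrp : r = p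
      · subst hrp
        rcases hy4 with h | h | h | h
        · exact (hcpe r).1 h.symm
        · exact hν₁y r h.symm
        · exact hν₂y r h.symm
        · exact hζy r h.symm
      · refine hfar2 p r (fun hh => hrp hh.symm) p.1.2 (Or.inr (Or.inl rfl)) ?_
        rcases hy4 with h | h | h | h
        · exact Or.inl h
        · exact Or.inr (Or.inr (Or.inl h))
        · exact Or.inr (Or.inr (Or.inr (Or.inl h)))
        · exact Or.inr (Or.inr (Or.inr (Or.inr h)))
    -- a is free at x_p after the flip
    have hFX : ∀ (p : {p // p ∈ S}) (e' : Sym2 V), p.1.1 ∈ e' → σ₂ e' ≠ some a := by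
      intro p e' hx he'
      rcases flp_eq_some he' with ⟨hcol, hnc⟩ | ⟨_, hc⟩
      · by_cases hasg : ∃ oc, Asg₁ e' oc
        · obtain ⟨oc, hoc⟩ := hasg
          have hval : σ₁ e' = oc := ovr_eq_of hfun₁ hoc
          obtain ⟨r, hforms⟩ := hoc
          rcases hforms with ⟨rfl, rfl⟩ | ⟨rfl, rfl⟩ | ⟨rfl, rfl⟩ | ⟨rfl, rfl⟩
          · -- the flipped swap edge x_r ν₁_r
            have hxR : r.1.1 ∈ R := ⟨r.1.1, ⟨r, rfl⟩, Reachable.refl _⟩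
            exact hnc ⟨Or.inl hcol, r.1.1, Sym2.mem_mk_left _ _, hxR⟩
          · exact hac (Option.some_injective _ (hval.symm.trans hcol)).symm
          · exact hac (Option.some_injective _ (hval.symm.trans hcol)).symm
          · -- e' = s(ζ r, ν₂ r) does not contain x_p
            rcases Sym2.mem_iff.mp hx with h | h
            · by_cases hrp : r = p
              · subst hrp; exact hζx r h.symm
              · exact hfar2 p r (fun hh => hrp hh.symm) p.1.1 (Or.inl rfl)
                  (Or.inr (Or.inr (Or.inr (Or.inr h))))
            · by_cases hrp : r = p
              · subst hrp; exact hν₂x r h.symm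
              · exact hfar2 p r (fun hh => hrp hh.symm) p.1.1 (Or.inl rfl)
                  (Or.inr (Or.inr (Or.inr (Or.inl h))))
        · have hπe : π e' = some a := by
            rw [← ovr_eq_base (base := π) hasg]
            exact hcol
          have : e' = s(p.1.1, ν₂ p) :=
            unique_color hπ.p2 hπe (hcolxv₂ p) hx (Sym2.mem_mk_left _ _)
          exact hasg ⟨some c, ⟨p, Or.inr (Or.inl ⟨this, rfl⟩)⟩⟩
      · rcases hc with ⟨hk, _⟩ | ⟨_, hcol⟩
        · exact hab hk
        · by_cases hasg : ∃ oc, Asg₁ e' oc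
          · obtain ⟨oc, hoc⟩ := hasg
            have hval : σ₁ e' = oc := ovr_eq_of hfun₁ hoc
            obtain ⟨r, hforms⟩ := hoc
            rcases hforms with ⟨_, rfl⟩ | ⟨_, rfl⟩ | ⟨_, rfl⟩ | ⟨_, rfl⟩
            · exact hab (Option.some_injective _ (hval.symm.trans hcol))
            · exact hbc (Option.some_injective _ (hval.symm.trans hcol)).symm
            · exact hbc (Option.some_injective _ (hval.symm.trans hcol)).symm
            · exact hab (Option.some_injective _ (hval.symm.trans hcol))
          · have hπe : π e' = some b := by
              rw [← ovr_eq_base (base := π) hasg]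
              exact hcol
            exact hfreexb p e' hx hπe
    -- a is free at y_p after the flip
    have hFY : ∀ (p : {p // p ∈ S}) (e' : Sym2 V), p.1.2 ∈ e' → σ₂ e' ≠ some a := by
      intro p e' hy he'
      have hasg : ¬ ∃ oc, Asg₁ e' oc := fun h => hynotasg p e' hy h
      have hπσ : σ₁ e' = π e' := ovr_eq_base hasg
      rcases flp_eq_some he' with ⟨hcol, _⟩ | ⟨⟨u, hue, huR⟩, hc⟩
      · exact hfreeya p e' hy (hπσ ▸ hcol)
      · rcases hc with ⟨hk, _⟩ | ⟨_, hcol⟩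
        · exact hab hk
        · have hyR : p.1.2 ∈ R := hRclosed u huR e' hue (Or.inr hcol) p.1.2 hy
          obtain ⟨s, ⟨r, rfl⟩, hreach⟩ := hyR
          exact hnoreach r p hreach
    set Asg₂ : Sym2 V → Option (Fin 8) → Prop :=
      fun e oc => ∃ p : {p // p ∈ S}, e = s(p.1.1, p.1.2) ∧ oc = some a with hAsg₂def
    have hfun₂ : ∀ e oc oc', Asg₂ e oc → Asg₂ e oc' → oc = oc' := by
      rintro e oc oc' ⟨p, _, rfl⟩ ⟨q, _, rfl⟩; rfl
    refine assemble hσ₂p hnone hfun₂ ?_ ?_ ?_ ?_ ?_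
    · rintro e oc ⟨p, rfl, rfl⟩
      exact ⟨(G.mem_edgeSet).mpr (hT p).1, by simp⟩
    · rintro e₁ e₂ oc ⟨p, rfl, rfl⟩ ⟨q, rfl, _⟩ hne ⟨v, hv1, hv2⟩
      have hpq : p ≠ q := fun h => hne (by rw [h])
      refine hfar2 p q hpq v ?_ ?_
      · rcases Sym2.mem_iff.mp hv1 with rfl | rfl
        · exact Or.inl rfl
        · exact Or.inr (Or.inl rfl)
      · rcases Sym2.mem_iff.mp hv2 with rfl | rfl
        · exact Or.inl rfl
        · exact Or.inr (Or.inl rfl)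
    · rintro e oc ⟨p, rfl, rfl⟩ v hv e' hve' hna
      rcases Sym2.mem_iff.mp hv with rfl | rfl
      · exact hFX p e' hve'
      · exact hFY p e' hve'
    · rintro e oc ⟨p, rfl, rfl⟩
      exact Or.inr ⟨p.1, p.2, rfl⟩
    · intro p hp
      exact ⟨some a, ⟨⟨p, hp⟩, rfl, rfl⟩⟩
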